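/- arXiv:1901.01793 — 9 statements merged into one kernel-verified Lean document; each statement's English description precedes it below -/
import Mathlib

section
/- For an absolutely continuous nonnegative random variable X with finite moment of order m+s-1 (m ≥ 1, s ≥ 2 integers), the m-th moment of the s-iterated distribution induced by X equals μ_{s,m} = C(m+s-1, m)^{-1} · E[X^{m+s-1}] / E[X^{s-1}], where C(n,k) is the binomial coefficient. -/
open MeasureTheory Set Real

lemma beta_nat (m k : ℕ) {t : ℝ} (ht : 0 < t) :
    ∫ x in (0:ℝ)..t, x ^ m * (t - x) ^ k
      = (m.factorial * k.factorial / (m + k + 1).factorial) * t ^ (m + k + 1) := by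
  have hne : ((m + k + 1).factorial : ℂ) ≠ 0 := Nat.cast_ne_zero.mpr (Nat.factorial_ne_zero _)
  have h := Complex.betaIntegral_scaled ((m : ℂ) + 1) ((k : ℂ) + 1) ht
  have hbeta : Complex.betaIntegral ((m : ℂ) + 1) ((k : ℂ) + 1)
      = (m.factorial : ℂ) * k.factorial / (m + k + 1).factorial := by
    have hg := Complex.Gamma_mul_Gamma_eq_betaIntegral
      (s := (m : ℂ) + 1) (t := (k : ℂ) + 1) (by simp; positivity) (by simp; positivity)
    have h1 : Complex.Gamma ((m : ℂ) + 1) = m.factorial := Complex.Gamma_nat_eq_factorial m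
    have h2 : Complex.Gamma ((k : ℂ) + 1) = k.factorial := Complex.Gamma_nat_eq_factorial k
    have h3 : Complex.Gamma (((m : ℂ) + 1) + ((k : ℂ) + 1)) = ((m + k + 1).factorial : ℂ) := by
      have := Complex.Gamma_nat_eq_factorial (m + k + 1)
      rw [← this]; congr 1; push_cast; ring
    rw [h1, h2, h3] at hg
    rw [eq_div_iff hne]
    linear_combination -hg
  rw [hbeta] at h
  have hL : (∫ x in (0:ℝ)..t, (x : ℂ) ^ ((m : ℂ) + 1 - 1) * ((t : ℂ) - x) ^ ((k : ℂ) + 1 - 1))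
      = ((∫ x in (0:ℝ)..t, x ^ m * (t - x) ^ k : ℝ) : ℂ) := by
    rw [← intervalIntegral.integral_ofReal]
    apply intervalIntegral.integral_congr
    intro x _
    dsimp only
    have e1 : (m : ℂ) + 1 - 1 = ((m : ℕ) : ℂ) := by push_cast; ring
    have e2 : (k : ℂ) + 1 - 1 = ((k : ℕ) : ℂ) := by push_cast; ring
    rw [e1, e2, Complex.cpow_natCast, Complex.cpow_natCast]
    push_cast
    ring
  rw [hL] at h
  have hR : ((t : ℂ)) ^ ((m : ℂ) + 1 + ((k : ℂ) + 1) - 1)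
      * ((m.factorial : ℂ) * k.factorial / (m + k + 1).factorial)
      = (((m.factorial * k.factorial / (m + k + 1).factorial) * t ^ (m + k + 1) : ℝ) : ℂ) := by
    have e : (m : ℂ) + 1 + ((k : ℂ) + 1) - 1 = ((m + k + 1 : ℕ) : ℂ) := by push_cast; ring
    rw [e, Complex.cpow_natCast]
    push_cast
    ring
  rw [hR] at h
  exact_mod_cast h

lemma key_fubini (g : ℝ → ℝ) (hg : Measurable g) (hg0 : ∀ t, 0 ≤ g t) (m k : ℕ)
    (hmom : IntegrableOn (fun t => t ^ (m + k + 1) * g t) (Ioi 0)) :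
    ∫ x in Ioi (0:ℝ), x ^ m * ∫ t in Ioi x, (t - x) ^ k * g t
      = ((m.factorial : ℝ) * k.factorial / (m + k + 1).factorial)
          * ∫ t in Ioi (0:ℝ), t ^ (m + k + 1) * g t := by
  set B : ℝ := (m.factorial : ℝ) * k.factorial / (m + k + 1).factorial with hB
  set μ : Measure ℝ := volume.restrict (Ioi 0) with hμ
  set G : ℝ × ℝ → ℝ :=
    fun p => {q : ℝ × ℝ | 0 < q.1 ∧ q.1 < q.2}.indicator (fun q => q.1 ^ m * (q.2 - q.1) ^ k * g q.2) p
    with hG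
  have hsetm : MeasurableSet {q : ℝ × ℝ | 0 < q.1 ∧ q.1 < q.2} :=
    ((measurableSet_lt measurable_const measurable_fst).inter
      (measurableSet_lt measurable_fst measurable_snd))
  have hGmeas : Measurable G := by
    apply Measurable.indicator _ hsetm
    exact ((measurable_fst.pow_const m).mul
      ((measurable_snd.sub measurable_fst).pow_const k)).mul (hg.comp measurable_snd)
  have hGnonneg : ∀ p, 0 ≤ G p := by
    intro p
    apply indicator_nonneg
    intro q hq
    simp only [mem_setOf_eq] at hq
    have h1 : 0 ≤ q.2 - q.1 := by linarith
    have h2 : (0:ℝ) ≤ q.1 := hq.1.le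
    exact mul_nonneg (mul_nonneg (pow_nonneg h2 m) (pow_nonneg h1 k)) (hg0 _)
  have hGx : ∀ t : ℝ, (fun x => G (x, t)) = (Ioo 0 t).indicator (fun x => x ^ m * (t - x) ^ k * g t) := by
    intro t
    funext x
    by_cases h1 : 0 < x <;> by_cases h2 : x < t <;>
      simp [hG, indicator, h1, h2, mem_Ioo]
  have hGt : ∀ x : ℝ, 0 < x → (fun t => G (x, t)) = (Ioi x).indicator (fun t => x ^ m * (t - x) ^ k * g t) := by
    intro x hx
    funext t
    by_cases h : x < t <;> simp [hG, indicator, h, hx]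
  have hinner : ∀ t : ℝ, 0 < t → ∫ x, G (x, t) ∂μ = B * (t ^ (m + k + 1) * g t) := by
    intro t ht
    rw [hGx t, integral_indicator measurableSet_Ioo, hμ,
      Measure.restrict_restrict measurableSet_Ioo]
    have h01 : Ioo 0 t ∩ Ioi 0 = Ioo 0 t := inter_eq_left.mpr Ioo_subset_Ioi_self
    rw [h01, ← integral_Ioc_eq_integral_Ioo, ← intervalIntegral.integral_of_le ht.le]
    rw [intervalIntegral.integral_mul_const, beta_nat m k ht]
    ring
  have hxint : ∀ t : ℝ, 0 < t → Integrable (fun x => G (x, t)) μ := by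
    intro t ht
    rw [hGx t]
    rw [integrable_indicator_iff measurableSet_Ioo]
    have : μ.restrict (Ioo 0 t) = volume.restrict (Ioo 0 t) := by
      rw [hμ, Measure.restrict_restrict measurableSet_Ioo,
        inter_eq_left.mpr Ioo_subset_Ioi_self]
    unfold IntegrableOn
    rw [this]
    have hc : Continuous (fun x : ℝ => x ^ m * (t - x) ^ k * g t) := by continuity
    exact (hc.integrableOn_Icc (a := 0) (b := t)).mono_set Ioo_subset_Icc_self
  have hGint : Integrable G (μ.prod μ) := by
    rw [integrable_prod_iff' hGmeas.aestronglyMeasurable]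
    constructor
    · filter_upwards [ae_restrict_mem measurableSet_Ioi] with t ht
      exact hxint t ht
    · have heq : (fun t => B * (t ^ (m + k + 1) * g t)) =ᶠ[ae μ] (fun t => ∫ x, ‖G (x, t)‖ ∂μ) := by
        filter_upwards [ae_restrict_mem measurableSet_Ioi] with t ht
        rw [← hinner t ht]
        congr 1
        funext x
        exact (Real.norm_of_nonneg (hGnonneg (x, t))).symm
      exact (hmom.const_mul B).congr heq
  have hswap := integral_integral_swap (f := fun x t => G (x, t)) hGint
  have hLHS : ∫ x in Ioi (0:ℝ), x ^ m * ∫ t in Ioi x, (t - x) ^ k * g t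
      = ∫ x, ∫ t, G (x, t) ∂μ ∂μ := by
    apply setIntegral_congr_fun measurableSet_Ioi
    intro x hx
    simp only [mem_Ioi] at hx
    dsimp only
    rw [hGt x hx, integral_indicator measurableSet_Ioi, hμ,
      Measure.restrict_restrict measurableSet_Ioi]
    have : Ioi x ∩ Ioi 0 = Ioi x := by
      rw [inter_eq_left]
      exact Ioi_subset_Ioi hx.le
    rw [this]
    simp only [mul_assoc]
    rw [integral_const_mul]
  have hRHS : ∫ t, ∫ x, G (x, t) ∂μ ∂μ = B * ∫ t in Ioi (0:ℝ), t ^ (m + k + 1) * g t := by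
    rw [← integral_const_mul]
    apply setIntegral_congr_fun measurableSet_Ioi
    intro t ht
    simp only [mem_Ioi] at ht
    dsimp only
    rw [hinner t ht]
  rw [hLHS, hswap, hRHS]

/-- The m-th moment of the s-iterated distribution induced by X equals
`C(m+s-1, m)⁻¹ · E[X^{m+s-1}] / E[X^{s-1}]`. -/
theorem iterated_moment
    (f : ℝ → ℝ) (hf_nonneg : ∀ t, 0 ≤ f t)
    (hf_prob : ∫ t in Ioi (0 : ℝ), f t = 1)
    (m s : ℕ) (hm : 1 ≤ m) (hs : 2 ≤ s)
    (hmom : IntegrableOn (fun t => t ^ (m + s - 1) * f t) (Ioi 0)) :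
    ∫ x in Ioi (0 : ℝ),
        x ^ m * (((s : ℝ) - 1) / (∫ t in Ioi (0 : ℝ), t ^ (s - 1) * f t) *
          ∫ t in Ioi x, (t - x) ^ (s - 2) * f t)
      = (((m + s - 1).choose m : ℝ))⁻¹ *
          ((∫ t in Ioi (0 : ℝ), t ^ (m + s - 1) * f t) /
           (∫ t in Ioi (0 : ℝ), t ^ (s - 1) * f t)) := by
  obtain ⟨k, rfl⟩ : ∃ k, s = k + 2 := ⟨s - 2, by omega⟩
  have e1 : k + 2 - 1 = k + 1 := rfl
  have e2 : k + 2 - 2 = k := rfl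
  have e3 : m + (k + 2) - 1 = m + k + 1 := by omega
  simp only [e1, e2, e3] at hmom ⊢
  have hf_int : IntegrableOn f (Ioi 0) := by
    by_contra h
    rw [integral_undef h] at hf_prob
    norm_num at hf_prob
  set g : ℝ → ℝ := fun t => max (hf_int.1.mk f t) 0 with hgdef
  have hgmeas : Measurable g :=
    hf_int.1.stronglyMeasurable_mk.measurable.max measurable_const
  have hg0 : ∀ t, 0 ≤ g t := fun t => le_max_right _ _
  have hfg : ∀ᵐ t ∂(volume.restrict (Ioi (0:ℝ))), f t = g t := by
    filter_upwards [hf_int.1.ae_eq_mk] with t ht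
    rw [hgdef]
    simp only [← ht]
    exact (max_eq_left (hf_nonneg t)).symm
  have hmom_g : IntegrableOn (fun t => t ^ (m + k + 1) * g t) (Ioi 0) := by
    apply hmom.congr
    filter_upwards [hfg] with t ht
    rw [ht]
  have hIeq : (∫ t in Ioi (0:ℝ), t ^ (m + k + 1) * f t)
      = ∫ t in Ioi (0:ℝ), t ^ (m + k + 1) * g t := by
    apply integral_congr_ae
    filter_upwards [hfg] with t ht
    rw [ht]
  have hinner : ∀ x : ℝ, 0 < x →
      (∫ t in Ioi x, (t - x) ^ k * f t) = ∫ t in Ioi x, (t - x) ^ k * g t := by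
    intro x hx
    apply integral_congr_ae
    filter_upwards [ae_restrict_of_ae_restrict_of_subset (Ioi_subset_Ioi hx.le) hfg] with t ht
    rw [ht]
  set I1 : ℝ := ∫ t in Ioi (0:ℝ), t ^ (k + 1) * f t with hI1
  set I : ℝ := ∫ t in Ioi (0:ℝ), t ^ (m + k + 1) * f t with hIdef
  set B : ℝ := (m.factorial : ℝ) * k.factorial / (m + k + 1).factorial with hB
  have step1 : (∫ x in Ioi (0:ℝ),
      x ^ m * ((((k + 2 : ℕ) : ℝ) - 1) / I1 * ∫ t in Ioi x, (t - x) ^ k * f t))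
      = (((k:ℝ) + 1) / I1) * ∫ x in Ioi (0:ℝ), x ^ m * ∫ t in Ioi x, (t - x) ^ k * g t := by
    rw [← integral_const_mul]
    apply setIntegral_congr_fun measurableSet_Ioi
    intro x hx
    simp only [mem_Ioi] at hx
    dsimp only
    rw [hinner x hx]
    push_cast
    ring
  have step2 : (∫ x in Ioi (0:ℝ), x ^ m * ∫ t in Ioi x, (t - x) ^ k * g t) = B * I := by
    rw [key_fubini g hgmeas hg0 m k hmom_g, ← hIeq, ← hB]
  have hcb : (((k:ℝ) + 1) * B) = (((m + k + 1).choose m : ℝ))⁻¹ := by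
    have hch := Nat.choose_mul_factorial_mul_factorial (show m ≤ m + k + 1 by omega)
    rw [show m + k + 1 - m = k + 1 by omega] at hch
    have hcast : (((m + k + 1).choose m : ℝ)) * m.factorial * (k + 1).factorial
        = (m + k + 1).factorial := by exact_mod_cast hch
    have hne1 : ((m + k + 1).factorial : ℝ) ≠ 0 := Nat.cast_ne_zero.mpr (Nat.factorial_ne_zero _)
    have hne2 : (((m + k + 1).choose m : ℝ)) ≠ 0 :=
      Nat.cast_ne_zero.mpr (Nat.choose_pos (show m ≤ m + k + 1 by omega)).ne'
    have hfac : ((k + 1).factorial : ℝ) = ((k:ℝ) + 1) * k.factorial := by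
      rw [Nat.factorial_succ]; push_cast; ring
    rw [hfac] at hcast
    rw [hB]
    field_simp
    linear_combination hcast
  rw [step1, step2, ← hcb]
  ring
end

section
/- If X is an absolutely continuous nonnegative random variable such that the ratio E[X^s]/E[X^{s-1}] is bounded uniformly in s ≥ 1, then the variance σ_s² of the s-iterated distribution induced by X tends to 0 as s → ∞. -/
open MeasureTheory Set Real Filter

/-- If the ratio of consecutive moments `E X^s / E X^{s-1}` is uniformly bounded in `s ≥ 1`,
then the variance of the s-iterated distribution tends to 0 as `s → ∞`. -/
theorem iterated_variance_tendsto_zero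
    (f : ℝ → ℝ) (hf_nonneg : ∀ t, 0 ≤ f t)
    (hf_prob : ∫ t in Ioi (0 : ℝ), f t = 1)
    (hmom : ∀ k : ℕ, IntegrableOn (fun t => t ^ k * f t) (Ioi 0))
    (hpos : ∀ k : ℕ, 0 < ∫ t in Ioi (0 : ℝ), t ^ k * f t)
    (hbdd : ∃ C : ℝ, ∀ s : ℕ, 1 ≤ s →
      (∫ t in Ioi (0 : ℝ), t ^ s * f t) / (∫ t in Ioi (0 : ℝ), t ^ (s - 1) * f t) ≤ C) :
    Tendsto (fun s : ℕ =>
      (1 / (s : ℝ)) * ((∫ t in Ioi (0 : ℝ), t ^ s * f t) / (∫ t in Ioi (0 : ℝ), t ^ (s - 1) * f t)) *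
        ((2 / ((s : ℝ) + 1)) * ((∫ t in Ioi (0 : ℝ), t ^ (s + 1) * f t) / (∫ t in Ioi (0 : ℝ), t ^ s * f t))
          - (1 / (s : ℝ)) * ((∫ t in Ioi (0 : ℝ), t ^ s * f t) / (∫ t in Ioi (0 : ℝ), t ^ (s - 1) * f t))))
      atTop (nhds 0) := by
  obtain ⟨C, hC⟩ := hbdd
  have hCpos : 0 < C :=
    lt_of_lt_of_le (div_pos (hpos 1) (by simpa using hpos 0)) (hC 1 le_rfl)
  apply squeeze_zero_norm (a := fun s : ℕ => 3 * C ^ 2 / (s : ℝ))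
  · intro s
    rcases Nat.eq_zero_or_pos s with hs | hs
    · subst hs
      simp
    · have hsR : (1 : ℝ) ≤ (s : ℝ) := by exact_mod_cast hs
      have hsR0 : (0 : ℝ) < (s : ℝ) := by linarith
      set r1 : ℝ := (∫ t in Ioi (0 : ℝ), t ^ s * f t) / (∫ t in Ioi (0 : ℝ), t ^ (s - 1) * f t)
        with hr1def
      set r2 : ℝ := (∫ t in Ioi (0 : ℝ), t ^ (s + 1) * f t) / (∫ t in Ioi (0 : ℝ), t ^ s * f t)
        with hr2def
      have hr1nn : 0 ≤ r1 := le_of_lt (div_pos (hpos s) (hpos (s - 1)))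
      have hr2nn : 0 ≤ r2 := le_of_lt (div_pos (hpos (s + 1)) (hpos s))
      have hr1C : r1 ≤ C := hC s hs
      have hr2C : r2 ≤ C := by simpa using hC (s + 1) (by omega)
      have h1s : 1 / (s : ℝ) ≤ 1 := by
        rw [div_le_one hsR0]; linarith
      have h1s0 : 0 ≤ 1 / (s : ℝ) := by positivity
      have h2s : 2 / ((s : ℝ) + 1) ≤ 2 := by
        rw [div_le_iff₀ (by linarith)]; linarith
      have h2s0 : 0 ≤ 2 / ((s : ℝ) + 1) := by positivity
      have hA0 : 0 ≤ 1 / (s : ℝ) * r1 := mul_nonneg h1s0 hr1nn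
      have hAC : 1 / (s : ℝ) * r1 ≤ C / (s : ℝ) := by
        rw [one_div, inv_mul_eq_div]
        exact (div_le_div_iff_of_pos_right hsR0).mpr hr1C
      have hAle : 1 / (s : ℝ) * r1 ≤ C := by
        calc 1 / (s : ℝ) * r1 ≤ 1 * r1 := mul_le_mul_of_nonneg_right h1s hr1nn
        _ = r1 := one_mul _
        _ ≤ C := hr1C
      have hu : 2 / ((s : ℝ) + 1) * r2 ≤ 2 * C := mul_le_mul h2s hr2C hr2nn (by norm_num)
      have hu0 : 0 ≤ 2 / ((s : ℝ) + 1) * r2 := mul_nonneg h2s0 hr2nn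
      have hBle : |2 / ((s : ℝ) + 1) * r2 - 1 / (s : ℝ) * r1| ≤ 3 * C :=
        abs_le.mpr ⟨by linarith, by linarith⟩
      calc ‖1 / (s : ℝ) * r1 * (2 / ((s : ℝ) + 1) * r2 - 1 / (s : ℝ) * r1)‖
          = (1 / (s : ℝ) * r1) * |2 / ((s : ℝ) + 1) * r2 - 1 / (s : ℝ) * r1| := by
            rw [Real.norm_eq_abs, abs_mul, abs_of_nonneg hA0]
        _ ≤ (C / (s : ℝ)) * (3 * C) := mul_le_mul hAC hBle (abs_nonneg _) (by positivity)
        _ = 3 * C ^ 2 / (s : ℝ) := by ring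
  · exact tendsto_const_div_atTop_nhds_zero_nat _
end

section
/- If X has the Gamma(2, λ) distribution (density λ²xe^{−λx}), then for every s ≥ 1 the density of the s-iterated distribution induced by X equals g_s(x) = (1/s) λ² x e^{−λx} + ((s-1)/s) λ e^{−λx}. -/
open MeasureTheory Set Real

lemma integrable_pow_exp_aux (l : ℝ) (hl : 0 < l) (n : ℕ) :
    IntegrableOn (fun t : ℝ => t ^ n * Real.exp (-l * t)) (Ioi 0) := by
  have h := integrableOn_rpow_mul_exp_neg_mul_rpow (p := 1) (s := (n : ℝ)) (b := l)
    (lt_of_lt_of_le neg_one_lt_zero (Nat.cast_nonneg n)) zero_lt_one hl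
  refine h.congr_fun (fun t ht => ?_) measurableSet_Ioi
  dsimp only
  rw [Real.rpow_natCast, Real.rpow_one]

lemma integral_pow_exp_aux (l : ℝ) (hl : 0 < l) (n : ℕ) :
    ∫ t in Ioi (0:ℝ), t ^ n * Real.exp (-l * t) = (Nat.factorial n : ℝ) / l ^ (n + 1) := by
  have h := Real.integral_rpow_mul_exp_neg_mul_Ioi (a := (n : ℝ) + 1) (by positivity) hl
  rw [show ∫ t in Ioi (0:ℝ), t ^ ((n:ℝ) + 1 - 1) * Real.exp (-(l * t))
      = ∫ t in Ioi (0:ℝ), t ^ n * Real.exp (-l * t) from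
    setIntegral_congr_fun measurableSet_Ioi (fun t ht => by
      rw [add_sub_cancel_right, Real.rpow_natCast, neg_mul])] at h
  rw [h, Real.Gamma_nat_eq_factorial, show (n:ℝ) + 1 = ((n+1 : ℕ) : ℝ) by push_cast; ring,
    Real.rpow_natCast, div_pow, one_pow]
  field_simp

lemma shift_integral_aux (x : ℝ) (F : ℝ → ℝ) :
    ∫ t in Ioi x, F t = ∫ u in Ioi (0:ℝ), F (u + x) := by
  have hmp : MeasurePreserving (fun u : ℝ => u + x) volume volume :=
    measurePreserving_add_right volume x
  have hemb : MeasurableEmbedding (fun u : ℝ => u + x) :=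
    (MeasurableEquiv.addRight x).measurableEmbedding
  have := hmp.setIntegral_preimage_emb hemb F (Ioi x)
  rw [← this]
  congr 1
  ext u; simp

/-- The s-iterated density induced by a `Gamma(2, λ)` random variable is
`g_s(x) = (1/s) λ² x e^{-λx} + ((s-1)/s) λ e^{-λx}`. -/
theorem iterated_density_gamma_two (l : ℝ) (hl : 0 < l) (s : ℕ) (hs : 1 ≤ s)
    (x : ℝ) (hx : 0 ≤ x) :
    (if s = 1 then l ^ 2 * x * Real.exp (-l * x)
     else ((s : ℝ) - 1) / (∫ t in Ioi (0 : ℝ), t ^ (s - 1) * (l ^ 2 * t * Real.exp (-l * t))) *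
       ∫ t in Ioi x, (t - x) ^ (s - 2) * (l ^ 2 * t * Real.exp (-l * t)))
    = (1 / (s : ℝ)) * l ^ 2 * x * Real.exp (-l * x)
      + (((s : ℝ) - 1) / (s : ℝ)) * l * Real.exp (-l * x) := by
  rcases eq_or_lt_of_le hs with h1 | h2
  · simp [← h1]
  · have hs2 : 2 ≤ s := h2
    have hne : s ≠ 1 := by omega
    rw [if_neg hne]
    -- denominator
    have hden : (∫ t in Ioi (0:ℝ), t ^ (s - 1) * (l ^ 2 * t * Real.exp (-l * t)))
        = l ^ 2 * ((Nat.factorial s : ℝ) / l ^ (s + 1)) := by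
      rw [show ∫ t in Ioi (0:ℝ), t ^ (s - 1) * (l ^ 2 * t * Real.exp (-l * t))
          = ∫ t in Ioi (0:ℝ), l ^ 2 * (t ^ s * Real.exp (-l * t)) from by
        congr 1; funext t
        have ht : t ^ (s - 1) * t = t ^ s := by
          rw [← pow_succ]; congr 1; omega
        rw [← ht]; ring]
      rw [integral_const_mul, integral_pow_exp_aux l hl s]
    -- numerator
    have hnum : (∫ t in Ioi x, (t - x) ^ (s - 2) * (l ^ 2 * t * Real.exp (-l * t)))
        = l ^ 2 * Real.exp (-l * x) *
          ((Nat.factorial (s-1) : ℝ) / l ^ s + x * ((Nat.factorial (s-2) : ℝ) / l ^ (s - 1))) := by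
      rw [shift_integral_aux x (fun t => (t - x) ^ (s - 2) * (l ^ 2 * t * Real.exp (-l * t)))]
      have heq : ∀ u : ℝ, (u + x - x) ^ (s - 2) * (l ^ 2 * (u + x) * Real.exp (-l * (u + x)))
          = l ^ 2 * Real.exp (-l * x) *
            (u ^ (s - 1) * Real.exp (-l * u) + x * (u ^ (s - 2) * Real.exp (-l * u))) := by
        intro u
        rw [add_sub_cancel_right, show s - 1 = (s - 2) + 1 by omega, pow_succ,
          show -l * (u + x) = -l * u + -l * x by ring, Real.exp_add]
        ring
      simp_rw [heq]
      rw [integral_const_mul, integral_add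
        ((integrable_pow_exp_aux l hl (s - 1)))
        ((integrable_pow_exp_aux l hl (s - 2)).const_mul x),
        integral_const_mul, integral_pow_exp_aux l hl (s - 1), integral_pow_exp_aux l hl (s - 2),
        show s - 1 + 1 = s by omega, show s - 2 + 1 = s - 1 by omega]
    rw [hden, hnum]
    -- now pure algebra with factorials
    have hfac1 : (Nat.factorial s : ℝ) = s * Nat.factorial (s-1) := by
      rw [show s = (s - 1) + 1 by omega, Nat.factorial_succ]
      push_cast [show s - 1 + 1 = s by omega]
      ring
    have hfac2 : (Nat.factorial (s-1) : ℝ) = ((s:ℝ) - 1) * Nat.factorial (s-2) := by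
      rw [show s - 1 = (s - 2) + 1 by omega, Nat.factorial_succ]
      push_cast [show s - 2 + 1 = s - 1 by omega]
      have : ((s - 1 : ℕ) : ℝ) = (s : ℝ) - 1 := by
        push_cast [Nat.cast_sub (by omega : 1 ≤ s)]; ring
      rw [← this]
    have hls : l ^ (s + 1) = l ^ s * l := pow_succ l s
    have hls2 : l ^ s = l ^ (s - 1) * l := by
      rw [← pow_succ, show s - 1 + 1 = s by omega]
    have hfacpos : (0:ℝ) < (Nat.factorial (s-2) : ℝ) := by positivity
    have hspos : (0:ℝ) < s := by positivity
    have hsm1 : ((s:ℝ) - 1) ≠ 0 := by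
      have : (2:ℝ) ≤ s := by exact_mod_cast hs2
      nlinarith
    have hlne : l ≠ 0 := ne_of_gt hl
    rw [hfac1, hfac2, hls, hls2]
    field_simp
    ring
end

section
/- Let X have a Gamma(n, λ) distribution with integer shape n ≥ 2 and rate λ > 0, and let f(x) = λe^{−λx}. For every s ≥ 2, the density g_s of the s-iterated distribution induced by X satisfies the recursion g_s(x) = ((n-1)/(n+s-2)) (f * g_s^{(n-1)})(x) + ((s-1)/(n+s-2)) f(x), where g_s^{(n-1)} denotes the density of the s-iterated distribution induced by a Gamma(n-1, λ) variable. -/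
open MeasureTheory Set Real

/-- Density of the `Gamma(n, λ)` distribution (integer shape `n ≥ 1`). -/
noncomputable def gammaDens (n : ℕ) (l x : ℝ) : ℝ :=
  l ^ n * x ^ (n - 1) * Real.exp (-l * x) / (n - 1).factorial

/-- Convolution of densities on `[0, ∞)`. -/
noncomputable def convol (f g : ℝ → ℝ) (x : ℝ) : ℝ :=
  ∫ t in (0 : ℝ)..x, f t * g (x - t)

/-- Density of the s-iterated distribution induced by a density `g` (for `s ≥ 2`). -/
noncomputable def iterDens (g : ℝ → ℝ) (s : ℕ) (x : ℝ) : ℝ :=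
  ((s : ℝ) - 1) / (∫ t in Set.Ioi (0 : ℝ), t ^ (s - 1) * g t) *
    ∫ t in Set.Ioi x, (t - x) ^ (s - 2) * g t

lemma integrableOn_pow_exp (k : ℕ) {l : ℝ} (hl : 0 < l) :
    IntegrableOn (fun t : ℝ => t ^ k * Real.exp (-(l * t))) (Ioi 0) := by
  have h := integrableOn_rpow_mul_exp_neg_mul_rpow (s := (k:ℝ)) (p := 1)
    (by exact_mod_cast neg_one_lt_zero.trans_le (Nat.cast_nonneg k)) zero_lt_one hl
  simpa [Real.rpow_natCast, Real.rpow_one, neg_mul] using h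

lemma integral_pow_exp (k : ℕ) {l : ℝ} (hl : 0 < l) :
    ∫ t in Ioi (0:ℝ), t ^ k * Real.exp (-(l * t)) = k.factorial / l ^ (k + 1) := by
  have h := integral_rpow_mul_exp_neg_mul_Ioi (a := (k:ℝ) + 1) (by positivity) hl
  simp only [add_sub_cancel_right] at h
  rw [Real.Gamma_nat_eq_factorial] at h
  have h2 : ∫ t in Ioi (0:ℝ), t ^ k * Real.exp (-(l * t))
      = ∫ t in Ioi (0:ℝ), t ^ ((k:ℝ)) * Real.exp (-(l * t)) := by
    refine setIntegral_congr_fun measurableSet_Ioi fun t ht => ?_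
    rw [Real.rpow_natCast]
  rw [h2, h, show ((k:ℝ) + 1) = ((k + 1 : ℕ) : ℝ) by push_cast; ring, Real.rpow_natCast]
  rw [one_div, inv_pow, div_eq_mul_inv, mul_comm]

lemma tail_int (p q : ℕ) {l : ℝ} (hl : 0 < l) (x : ℝ) :
    ∫ t in Ioi x, (t - x) ^ q * (t ^ p * Real.exp (-(l * t)))
      = Real.exp (-(l * x)) * ∑ k ∈ Finset.range (p + 1),
          (p.choose k : ℝ) * x ^ (p - k) * ((q + k).factorial / l ^ (q + k + 1)) := by
  have hshift : ∫ t in Ioi x, (t - x) ^ q * (t ^ p * Real.exp (-(l * t)))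
      = ∫ u in Ioi (0:ℝ), u ^ q * ((u + x) ^ p * Real.exp (-(l * (u + x)))) := by
    have h := (measurePreserving_add_right volume x).setIntegral_preimage_emb
      (measurableEmbedding_addRight x)
      (fun t => (t - x) ^ q * (t ^ p * Real.exp (-(l * t)))) (Ioi x)
    have hpre : (fun u : ℝ => u + x) ⁻¹' (Ioi x) = Ioi 0 := by
      ext u; simp [lt_add_iff_pos_left]
    rw [hpre] at h
    rw [← h]
    refine setIntegral_congr_fun measurableSet_Ioi fun u _ => ?_
    simp [add_sub_cancel_right]
  rw [hshift]
  have hfun : ∀ u : ℝ, u ^ q * ((u + x) ^ p * Real.exp (-(l * (u + x))))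
      = ∑ k ∈ Finset.range (p + 1),
          (Real.exp (-(l * x)) * ((p.choose k : ℝ) * x ^ (p - k))) *
            (u ^ (q + k) * Real.exp (-(l * u))) := by
    intro u
    rw [add_pow, mul_add, neg_add, Real.exp_add, Finset.sum_mul, Finset.mul_sum]
    exact Finset.sum_congr rfl fun k _ => by rw [pow_add]; ring
  rw [integral_congr_ae (Filter.Eventually.of_forall hfun)]
  rw [integral_finset_sum _ fun k _ =>
    ((integrableOn_pow_exp (q + k) hl).const_mul _)]
  rw [Finset.mul_sum]
  exact Finset.sum_congr rfl fun k _ => by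
    rw [MeasureTheory.integral_const_mul, integral_pow_exp _ hl]; ring

lemma moment (m s : ℕ) {l : ℝ} (hl : 0 < l) :
    ∫ t in Ioi (0:ℝ), t ^ (s + 1) * gammaDens (m + 1) l t
      = ((m + s + 1).factorial : ℝ) / (m.factorial * l ^ (s + 1)) := by
  have hfun : ∀ t : ℝ, t ^ (s + 1) * gammaDens (m + 1) l t
      = (l ^ (m + 1) / m.factorial) * (t ^ (m + s + 1) * Real.exp (-(l * t))) := by
    intro t
    unfold gammaDens
    simp only [Nat.add_sub_cancel, neg_mul]
    ring
  rw [integral_congr_ae (Filter.Eventually.of_forall hfun), MeasureTheory.integral_const_mul,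
    integral_pow_exp _ hl]
  have h1 : (m.factorial : ℝ) ≠ 0 := Nat.cast_ne_zero.2 m.factorial_ne_zero
  have h2 : l ≠ 0 := hl.ne'
  field_simp
  ring

lemma iter_formula (m s : ℕ) {l : ℝ} (hl : 0 < l) (x : ℝ) :
    iterDens (gammaDens (m + 1) l) (s + 2) x
      = l * Real.exp (-(l * x)) * (((s : ℝ) + 1) / (m + s + 1).factorial) *
          ∑ k ∈ Finset.range (m + 1),
            (m.choose k : ℝ) * (s + k).factorial * (l * x) ^ (m - k) := by
  unfold iterDens
  rw [show s + 2 - 1 = s + 1 from by omega, show s + 2 - 2 = s from by omega]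
  rw [moment m s hl]
  have htail : ∫ t in Ioi x, (t - x) ^ s * gammaDens (m + 1) l t
      = (l ^ (m + 1) / m.factorial) * (Real.exp (-(l * x)) * ∑ k ∈ Finset.range (m + 1),
          (m.choose k : ℝ) * x ^ (m - k) * ((s + k).factorial / l ^ (s + k + 1))) := by
    rw [← tail_int m s hl x, ← MeasureTheory.integral_const_mul]
    refine integral_congr_ae (Filter.Eventually.of_forall fun t => ?_)
    unfold gammaDens
    simp only [Nat.add_sub_cancel, neg_mul]
    ring
  rw [htail]
  have h1 : (m.factorial : ℝ) ≠ 0 := Nat.cast_ne_zero.2 m.factorial_ne_zero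
  have h2 : ((m + s + 1).factorial : ℝ) ≠ 0 := Nat.cast_ne_zero.2 (Nat.factorial_ne_zero _)
  have h2' : l ≠ 0 := hl.ne'
  push_cast
  simp only [Finset.mul_sum]
  refine Finset.sum_congr rfl fun k hk => ?_
  have hk' : k ≤ m := Nat.lt_succ_iff.1 (Finset.mem_range.1 hk)
  obtain ⟨e, rfl⟩ : ∃ e, m = k + e := ⟨m - k, by omega⟩
  rw [Nat.add_sub_cancel_left, mul_pow]
  field_simp
  ring

lemma conv_formula (v s : ℕ) {l : ℝ} (hl : 0 < l) (x : ℝ) :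
    convol (fun t => l * Real.exp (-(l * t))) (iterDens (gammaDens (v + 1) l) (s + 2)) x
      = l * Real.exp (-(l * x)) * (((s : ℝ) + 1) / (v + s + 1).factorial) *
          ∑ k ∈ Finset.range (v + 1),
            (v.choose k : ℝ) * (s + k).factorial * (l * x) ^ (v + 1 - k) / ((v : ℝ) + 1 - k) := by
  unfold convol
  have h1 : ∀ t : ℝ, (l * Real.exp (-(l * t))) * iterDens (gammaDens (v + 1) l) (s + 2) (x - t)
      = ∑ k ∈ Finset.range (v + 1),
          (l * l * Real.exp (-(l * x)) * (((s : ℝ) + 1) / (v + s + 1).factorial) *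
            ((v.choose k : ℝ) * (s + k).factorial) * l ^ (v - k)) * (x - t) ^ (v - k) := by
    intro t
    rw [iter_formula v s hl (x - t)]
    simp only [Finset.mul_sum]
    refine Finset.sum_congr rfl fun k _ => ?_
    have he : Real.exp (-(l * t)) * Real.exp (-(l * (x - t))) = Real.exp (-(l * x)) := by
      rw [← Real.exp_add]; congr 1; ring
    rw [mul_pow, ← he]; ring
  simp_rw [h1]
  rw [intervalIntegral.integral_finset_sum (fun k _ => (Continuous.intervalIntegrable
    (by continuity) _ _))]
  have h2 : ∀ j : ℕ, ∫ t in (0:ℝ)..x, (x - t) ^ j = x ^ (j + 1) / (j + 1) := by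
    intro j
    rw [intervalIntegral.integral_comp_sub_left (fun u => u ^ j) x]
    simp [integral_pow]
  simp_rw [intervalIntegral.integral_const_mul, h2, Finset.mul_sum]
  refine Finset.sum_congr rfl fun k hk => ?_
  have hk' : k ≤ v := Nat.lt_succ_iff.1 (Finset.mem_range.1 hk)
  obtain ⟨e, rfl⟩ : ∃ e, v = k + e := ⟨v - k, by omega⟩
  rw [Nat.add_sub_cancel_left, show k + e + 1 - k = e + 1 from by omega, mul_pow]
  have h3 : (((k+e:ℕ):ℝ) + 1 - (k:ℕ)) = (e:ℝ) + 1 := by push_cast; ring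
  rw [h3]
  have h4 : ((e:ℝ) + 1) ≠ 0 := by positivity
  field_simp
  ring

/-- Recursion for the s-iterated density induced by a `Gamma(n, λ)` variable:
`g_s = ((n-1)/(n+s-2)) f ∗ g_s^{(n-1)} + ((s-1)/(n+s-2)) f` with `f(x) = λ e^{-λx}`. -/
theorem iterated_density_gamma_recursion (n s : ℕ) (hn : 2 ≤ n) (hs : 2 ≤ s)
    (l : ℝ) (hl : 0 < l) (x : ℝ) (hx : 0 ≤ x) :
    iterDens (gammaDens n l) s x
      = ((n : ℝ) - 1) / ((n : ℝ) + (s : ℝ) - 2) *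
          convol (fun t => l * Real.exp (-l * t)) (iterDens (gammaDens (n - 1) l) s) x
        + ((s : ℝ) - 1) / ((n : ℝ) + (s : ℝ) - 2) * (l * Real.exp (-l * x)) := by
  obtain ⟨v, rfl⟩ : ∃ v, n = v + 1 + 1 := ⟨n - 2, by omega⟩
  obtain ⟨σ, rfl⟩ : ∃ σ, s = σ + 2 := ⟨s - 2, by omega⟩
  simp only [neg_mul, Nat.add_sub_cancel]
  rw [iter_formula (v + 1) σ hl x, conv_formula v σ hl x]
  push_cast
  rw [Finset.sum_range_succ]
  simp only [Nat.choose_self, Nat.sub_self, pow_zero, Nat.cast_one, one_mul, mul_one]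
  rw [mul_add, Finset.mul_sum, Finset.mul_sum, Finset.mul_sum]
  congr 1
  · refine Finset.sum_congr rfl fun k hk => ?_
    have hk' : k ≤ v := Nat.lt_succ_iff.1 (Finset.mem_range.1 hk)
    have hfact : ((v + 1 + σ + 1).factorial : ℝ) = ((v:ℝ) + σ + 2) * (v + σ + 1).factorial := by
      rw [show v + 1 + σ + 1 = (v + σ + 1) + 1 from by omega, Nat.factorial_succ]
      push_cast; ring
    have hnat : (v + 1).choose k * (v + 1 - k) = (v + 1) * v.choose k := by
      rw [← Nat.choose_succ_right_eq, ← Nat.add_one_mul_choose_eq]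
    have hne : ((v:ℝ) + 1 - (k:ℝ)) ≠ 0 := by
      have : (k:ℝ) < (v:ℝ) + 1 := by exact_mod_cast Nat.lt_succ_of_le hk'
      exact ne_of_gt (by linarith)
    have hR := congrArg (Nat.cast : ℕ → ℝ) hnat
    push_cast [Nat.cast_sub (by omega : k ≤ v + 1)] at hR
    have hc : (((v + 1).choose k : ℕ) : ℝ) = (((v:ℝ) + 1) * (v.choose k)) / ((v:ℝ) + 1 - k) := by
      rw [eq_div_iff hne]; linear_combination hR
    rw [hc, hfact, show ((v:ℝ) + 1 + 1 + ((σ:ℝ) + 2) - 2) = (v:ℝ) + (σ:ℝ) + 2 from by ring]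
    have h1 : ((v + σ + 1).factorial : ℝ) ≠ 0 := Nat.cast_ne_zero.2 (Nat.factorial_ne_zero _)
    have h2 : ((v:ℝ) + σ + 2) ≠ 0 := by positivity
    field_simp [hne]
    ring
  · have hfact : ((v + 1 + σ + 1).factorial : ℝ) = ((v:ℝ) + σ + 2) * (v + σ + 1).factorial := by
      rw [show v + 1 + σ + 1 = (v + σ + 1) + 1 from by omega, Nat.factorial_succ]
      push_cast; ring
    rw [show σ + (v + 1) = v + σ + 1 from by omega, hfact,
      show ((v:ℝ) + 1 + 1 + ((σ:ℝ) + 2) - 2) = (v:ℝ) + (σ:ℝ) + 2 from by ring]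
    have h1 : ((v + σ + 1).factorial : ℝ) ≠ 0 := Nat.cast_ne_zero.2 (Nat.factorial_ne_zero _)
    have h2 : ((v:ℝ) + σ + 2) ≠ 0 := by positivity
    field_simp
    ring
end

section
/- Let X have a Gamma(n, λ) distribution with integer shape n ≥ 2. Then for each fixed x ≥ 0, the density g_s(x) of the s-iterated distribution induced by X converges to λe^{−λx} as s → ∞. -/
open MeasureTheory Set Real Filter

lemma aux_integrable (m : ℕ) {b : ℝ} (hb : 0 < b) :
    IntegrableOn (fun t : ℝ => t ^ m * Real.exp (-(b * t))) (Ioi 0) := by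
  have h := integrableOn_rpow_mul_exp_neg_mul_rpow (s := (m : ℝ)) (p := 1)
    (lt_of_lt_of_le neg_one_lt_zero (Nat.cast_nonneg m)) one_pos hb
  refine h.congr_fun (fun t ht => ?_) measurableSet_Ioi
  beta_reduce
  rw [Real.rpow_natCast, Real.rpow_one, neg_mul]

lemma aux_integral (m : ℕ) {b : ℝ} (hb : 0 < b) :
    ∫ t in Ioi (0:ℝ), t ^ m * Real.exp (-(b * t)) = m.factorial / b ^ (m + 1) := by
  have h := Real.integral_rpow_mul_exp_neg_mul_Ioi (a := (m : ℝ) + 1) (by positivity) hb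
  rw [show ((m : ℝ) + 1 - 1) = (m : ℝ) by ring, Real.Gamma_nat_eq_factorial] at h
  calc ∫ t in Ioi (0:ℝ), t ^ m * Real.exp (-(b * t))
      = ∫ t in Ioi (0:ℝ), t ^ (m : ℝ) * Real.exp (-(b * t)) := by
        simp_rw [Real.rpow_natCast]
    _ = (1 / b) ^ ((m : ℝ) + 1) * m.factorial := h
    _ = m.factorial / b ^ (m + 1) := by
        rw [show ((m : ℝ) + 1) = ((m + 1 : ℕ) : ℝ) by push_cast; ring,
          Real.rpow_natCast, one_div, inv_pow, inv_mul_eq_div]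

lemma shift_integral (F : ℝ → ℝ) (x : ℝ) :
    ∫ t in Ioi x, F t = ∫ u in Ioi (0:ℝ), F (u + x) := by
  have h1 : MeasurePreserving (fun u : ℝ => u + x) volume volume :=
    measurePreserving_add_right volume x
  have h2 : MeasurableEmbedding (fun u : ℝ => u + x) :=
    (Homeomorph.addRight x).isClosedEmbedding.measurableEmbedding
  rw [← h1.setIntegral_image_emb h2 F (Ioi 0)]
  congr 1
  simp

lemma fact_mul_pow_le (s k : ℕ) : ∀ m, (s + k).factorial * (s + 1) ^ m ≤ (s + k + m).factorial := by
  intro m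
  induction m with
  | zero => simp
  | succ m ih =>
    calc (s + k).factorial * (s + 1) ^ (m + 1)
        = (s + k).factorial * (s + 1) ^ m * (s + 1) := by ring
      _ ≤ (s + k + m).factorial * (s + 1) := Nat.mul_le_mul_right _ ih
      _ ≤ (s + k + m).factorial * (s + k + m + 1) := Nat.mul_le_mul_left _ (by omega)
      _ = (s + k + (m + 1)).factorial := by
          rw [show s + k + (m+1) = (s+k+m) + 1 by ring, Nat.factorial_succ]; ring

lemma tendsto_top_term (p : ℕ) :
    Tendsto (fun s : ℕ => ((s:ℝ)+1) * (s+(p+1)).factorial / ((s+p+2).factorial : ℝ))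
      atTop (nhds 1) := by
  have he : ∀ s : ℕ, ((s:ℝ)+1) * (s+(p+1)).factorial / ((s+p+2).factorial : ℝ)
      = 1 - ((p:ℝ)+1) / ((s:ℝ)+p+2) := by
    intro s
    have h1 : (s+p+2).factorial = (s+p+2) * (s+(p+1)).factorial := by
      rw [show s+p+2 = (s+(p+1))+1 by ring, Nat.factorial_succ]
    have h2 : (0:ℝ) < (s:ℝ)+p+2 := by positivity
    have h3 : (0:ℝ) < ((s+(p+1)).factorial : ℝ) := by
      exact_mod_cast Nat.factorial_pos _
    rw [h1]
    push_cast
    field_simp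
    ring
  simp_rw [he]
  have hd : Tendsto (fun s : ℕ => (s:ℝ)+p+2) atTop atTop := by
    apply tendsto_atTop_add_const_right
    apply tendsto_atTop_add_const_right
    exact tendsto_natCast_atTop_atTop
  have := Tendsto.const_sub (1:ℝ) (Tendsto.div_atTop (tendsto_const_nhds (x := (p:ℝ)+1)) hd)
  simpa using this

lemma tendsto_small_term (p k : ℕ) (hk : k ≤ p) (c : ℝ) (hc : 0 ≤ c) :
    Tendsto (fun s : ℕ => c * (((s:ℝ)+1) * (s+k).factorial / ((s+p+2).factorial : ℝ)))
      atTop (nhds 0) := by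
  have hub : ∀ s : ℕ, c * (((s:ℝ)+1) * (s+k).factorial / ((s+p+2).factorial : ℝ))
      ≤ c / ((s:ℝ)+1) := by
    intro s
    have h1 : (s+k).factorial * (s+1)^2 ≤ (s+p+2).factorial := by
      calc (s+k).factorial * (s+1)^2 ≤ (s+k).factorial * (s+1)^(p+2-k) :=
            Nat.mul_le_mul_left _ (Nat.pow_le_pow_right (by omega) (by omega))
        _ ≤ (s+k+(p+2-k)).factorial := fact_mul_pow_le s k _
        _ = (s+p+2).factorial := by congr 1; omega
    have h1' : ((s+k).factorial : ℝ) * ((s:ℝ)+1)^2 ≤ ((s+p+2).factorial : ℝ) := by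
      exact_mod_cast h1
    have h2 : (0:ℝ) < (s:ℝ)+1 := by positivity
    have h3 : (0:ℝ) < ((s+p+2).factorial : ℝ) := by exact_mod_cast Nat.factorial_pos _
    have hr : ((s:ℝ)+1) * (s+k).factorial / ((s+p+2).factorial : ℝ) ≤ 1 / ((s:ℝ)+1) := by
      rw [div_le_div_iff₀ h3 h2]
      nlinarith [Nat.cast_nonneg (α := ℝ) (s+k).factorial]
    calc c * (((s:ℝ)+1) * (s+k).factorial / ((s+p+2).factorial : ℝ))
        ≤ c * (1 / ((s:ℝ)+1)) := mul_le_mul_of_nonneg_left hr hc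
      _ = c / ((s:ℝ)+1) := by rw [mul_one_div]
  have hlb : ∀ s : ℕ, 0 ≤ c * (((s:ℝ)+1) * (s+k).factorial / ((s+p+2).factorial : ℝ)) := by
    intro s
    have h3 : (0:ℝ) ≤ ((s+p+2).factorial : ℝ) := by positivity
    have h4 : (0:ℝ) ≤ ((s+k).factorial : ℝ) := by positivity
    positivity
  have hupper : Tendsto (fun s : ℕ => c / ((s:ℝ)+1)) atTop (nhds 0) := by
    apply Tendsto.div_atTop tendsto_const_nhds
    exact tendsto_atTop_add_const_right _ _ tendsto_natCast_atTop_atTop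
  exact tendsto_of_tendsto_of_tendsto_of_le_of_le tendsto_const_nhds hupper hlb hub

lemma sum_tendsto (p : ℕ) (l x : ℝ) (hl : 0 < l) (hx : 0 ≤ x) :
    Tendsto (fun s : ℕ => ∑ k ∈ Finset.range (p+2),
        ((p+1).choose k : ℝ) * (l*x)^(p+1-k) * (((s:ℝ)+1) * (s+k).factorial / ((s+p+2).factorial : ℝ)))
      atTop (nhds 1) := by
  have hterm : ∀ k ∈ Finset.range (p+2),
      Tendsto (fun s : ℕ => ((p+1).choose k : ℝ) * (l*x)^(p+1-k) *
          (((s:ℝ)+1) * (s+k).factorial / ((s+p+2).factorial : ℝ)))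
        atTop (nhds (if k = p+1 then (1:ℝ) else 0)) := by
    intro k hk
    by_cases h : k = p+1
    · subst h
      simp only [if_pos rfl, Nat.choose_self, Nat.cast_one, Nat.sub_self, pow_zero, one_mul,
        mul_one]
      exact tendsto_top_term p
    · rw [if_neg h]
      have hkp : k ≤ p := by
        have := Finset.mem_range.mp hk; omega
      exact tendsto_small_term p k hkp _ (by positivity)
  have := tendsto_finset_sum (Finset.range (p+2)) hterm
  simpa using this

lemma key_identity (p : ℕ) (l : ℝ) (hl : 0 < l) (x : ℝ) (s : ℕ) :
    iterDens (gammaDens (p+2) l) (s+2) x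
    = (l * Real.exp (-l * x)) * ∑ k ∈ Finset.range (p+2),
        ((p+1).choose k : ℝ) * (l*x)^(p+1-k) *
          (((s:ℝ)+1) * (s+k).factorial / ((s+p+2).factorial : ℝ)) := by
  unfold iterDens
  have hfact : (0:ℝ) < ((p+1).factorial : ℝ) := by exact_mod_cast Nat.factorial_pos _
  have hD : (∫ t in Ioi (0:ℝ), t ^ (s+1) * gammaDens (p+2) l t)
      = (l ^ (p+2) / ((p+1).factorial : ℝ)) * (((s+p+2).factorial : ℝ) / l ^ (s+p+3)) := by
    have e : ∀ t : ℝ, t ^ (s+1) * gammaDens (p+2) l t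
        = (l ^ (p+2) / ((p+1).factorial : ℝ)) * (t ^ (s+p+2) * Real.exp (-(l*t))) := by
      intro t
      simp only [gammaDens, show p+2-1 = p+1 from rfl, neg_mul]
      rw [show s+p+2 = (s+1)+(p+1) by ring, pow_add]
      ring
    simp_rw [e]
    rw [MeasureTheory.integral_const_mul, aux_integral (s+p+2) hl]
  have hN : (∫ t in Ioi x, (t - x) ^ s * gammaDens (p+2) l t)
      = ∑ k ∈ Finset.range (p+2),
          (l ^ (p+2) * x ^ (p+1-k) * ((p+1).choose k : ℝ) * Real.exp (-(l*x)) / ((p+1).factorial : ℝ))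
            * (((s+k).factorial : ℝ) / l ^ (s+k+1)) := by
    rw [shift_integral (fun t => (t - x) ^ s * gammaDens (p+2) l t) x]
    have e : ∀ u : ℝ, (u + x - x) ^ s * gammaDens (p+2) l (u + x)
        = ∑ k ∈ Finset.range (p+2),
            (l ^ (p+2) * x ^ (p+1-k) * ((p+1).choose k : ℝ) * Real.exp (-(l*x)) / ((p+1).factorial : ℝ))
              * (u ^ (s+k) * Real.exp (-(l*u))) := by
      intro u
      simp only [gammaDens, show p+2-1 = p+1 from rfl, add_sub_cancel_right]
      rw [show (-l*(u+x)) = -(l*u) + -(l*x) by ring, Real.exp_add,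
        add_pow u x (p+1)]
      rw [Finset.mul_sum, Finset.sum_mul, Finset.sum_div, Finset.mul_sum]
      refine Finset.sum_congr rfl fun k hk => ?_
      rw [pow_add u s k]
      ring
    simp_rw [e]
    rw [MeasureTheory.integral_finset_sum]
    · exact Finset.sum_congr rfl fun k hk => by
        rw [MeasureTheory.integral_const_mul, aux_integral (s+k) hl]
    · intro k hk
      exact ((aux_integrable (s+k) hl).const_mul _)
  rw [show s+2-1 = s+1 from rfl, show s+2-2 = s from rfl, hD, hN,
    Finset.mul_sum, Finset.mul_sum]
  refine Finset.sum_congr rfl fun k hk => ?_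
  obtain ⟨j, hj⟩ : ∃ j, p + 1 = k + j :=
    Nat.exists_eq_add_of_le (Nat.le_of_lt_succ (Finset.mem_range.mp hk))
  have hl' : l ≠ 0 := ne_of_gt hl
  have hF : ((s+p+2).factorial : ℝ) ≠ 0 := by
    exact_mod_cast (Nat.factorial_pos _).ne'
  rw [show p+1-k = j by omega, show p+2 = k+(j+1) by omega,
    show s+p+3 = (s+k+1)+(j+1) by omega, pow_add l k (j+1), pow_add l (s+k+1) (j+1),
    mul_pow l x j, neg_mul l x]
  push_cast
  field_simp
  ring

/-- For `X ~ Gamma(n, λ)` with integer `n ≥ 2`, the s-iterated density converges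
pointwise to the exponential density `λ e^{-λx}` as `s → ∞`. -/
theorem iterated_density_gamma_tendsto (n : ℕ) (hn : 2 ≤ n) (l : ℝ) (hl : 0 < l)
    (x : ℝ) (hx : 0 ≤ x) :
    Tendsto (fun s : ℕ => iterDens (gammaDens n l) s x) atTop
      (nhds (l * Real.exp (-l * x))) := by
  obtain ⟨p, rfl⟩ : ∃ p, n = p + 2 := ⟨n - 2, by omega⟩
  rw [← tendsto_add_atTop_iff_nat 2]
  have h := (sum_tendsto p l x hl hx).const_mul (l * Real.exp (-l * x))
  refine Tendsto.congr (fun s => (key_identity p l hl x s).symm) ?_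
  simpa using h
end

section
/- If X and Y are nonnegative absolutely continuous random variables with X ≤_{s-FR} Y (i.e., T̄_{Y,s}(x)/T̄_{X,s}(x) is nondecreasing in x ≥ 0), then X ≤_{(s+1)-FR} Y, i.e., T̄_{Y,s+1}(x)/T̄_{X,s+1}(x) is also nondecreasing in x ≥ 0. -/
open MeasureTheory Set Real
open scoped ENNReal

/-- Tail of the s-iterated distribution induced by a density `g` on `[0, ∞)`:
`T̄_s(x) = E[(X-x)_+^{s-1}] / E[X^{s-1}]` (for `s = 1` this is the survival function). -/
noncomputable def iterTail (g : ℝ → ℝ) (s : ℕ) (x : ℝ) : ℝ :=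
  (∫ t in Set.Ioi x, (t - x) ^ (s - 1) * g t) /
    (∫ t in Set.Ioi (0 : ℝ), t ^ (s - 1) * g t)

lemma aux_aesm {g : ℝ → ℝ} (hmom : ∀ k : ℕ, IntegrableOn (fun t => t ^ k * g t) (Ioi 0))
    {x : ℝ} (hx : 0 ≤ x) : AEStronglyMeasurable g (volume.restrict (Ioi x)) := by
  have h0 : AEStronglyMeasurable g (volume.restrict (Ioi (0:ℝ))) := by
    have := (hmom 0).aestronglyMeasurable
    simpa using this
  exact h0.mono_measure (Measure.restrict_mono (Ioi_subset_Ioi hx) le_rfl)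
lemma aux_integrable_s12 {g : ℝ → ℝ} (hg : ∀ t, 0 ≤ g t)
    (hmom : ∀ k : ℕ, IntegrableOn (fun t => t ^ k * g t) (Ioi 0)) (k : ℕ)
    {x : ℝ} (hx : 0 ≤ x) : IntegrableOn (fun t => (t - x) ^ k * g t) (Ioi x) := by
  apply Integrable.mono' ((hmom k).mono_set (Ioi_subset_Ioi hx))
  · exact (((continuous_id.sub continuous_const).pow k).aestronglyMeasurable).mul
      (aux_aesm hmom hx)
  · filter_upwards [ae_restrict_mem measurableSet_Ioi] with t ht
    have h1 : 0 ≤ t - x := by simp at ht; linarith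
    have h2 : (t - x) ^ k ≤ t ^ k := pow_le_pow_left₀ h1 (by linarith) k
    rw [Real.norm_eq_abs, abs_of_nonneg (mul_nonneg (pow_nonneg h1 k) (hg t))]
    exact mul_le_mul_of_nonneg_right h2 (hg t)
lemma aux_tail_nonneg {g : ℝ → ℝ} (hg : ∀ t, 0 ≤ g t) (k : ℕ) (x : ℝ) :
    0 ≤ ∫ t in Ioi x, (t - x) ^ k * g t := by
  apply setIntegral_nonneg measurableSet_Ioi
  intro t ht
  exact mul_nonneg (pow_nonneg (by simp at ht; linarith) k) (hg t)
lemma aux_mom_pos {g : ℝ → ℝ} (hg : ∀ t, 0 ≤ g t)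
    (hprob : ∫ t in Ioi (0:ℝ), g t = 1)
    (hmom : ∀ k : ℕ, IntegrableOn (fun t => t ^ k * g t) (Ioi 0)) (k : ℕ) :
    0 < ∫ t in Ioi (0:ℝ), t ^ k * g t := by
  rcases (setIntegral_nonneg measurableSet_Ioi
      (fun t ht => mul_nonneg (pow_nonneg (le_of_lt ht) k) (hg t))).lt_or_eq with h | h
  · exact h
  exfalso
  have hnn : 0 ≤ᵐ[volume.restrict (Ioi (0:ℝ))] fun t => t ^ k * g t := by
    filter_upwards [ae_restrict_mem measurableSet_Ioi] with t ht
    exact mul_nonneg (pow_nonneg (le_of_lt ht) k) (hg t)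
  have hz := (integral_eq_zero_iff_of_nonneg_ae hnn (hmom k)).mp h.symm
  have hz' : g =ᵐ[volume.restrict (Ioi (0:ℝ))] 0 := by
    filter_upwards [hz, ae_restrict_mem measurableSet_Ioi] with t h1 h2
    have : t ^ k ≠ 0 := pow_ne_zero k (ne_of_gt h2)
    simpa [this] using h1
  have : ∫ t in Ioi (0:ℝ), g t = 0 := by
    rw [integral_congr_ae hz']; simp
  rw [hprob] at this; norm_num at this
lemma aux_antitone {g : ℝ → ℝ} (hg : ∀ t, 0 ≤ g t)
    (hmom : ∀ k : ℕ, IntegrableOn (fun t => t ^ k * g t) (Ioi 0)) (k : ℕ)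
    {u v : ℝ} (hu : 0 ≤ u) (huv : u ≤ v) :
    ∫ t in Ioi v, (t - v) ^ k * g t ≤ ∫ t in Ioi u, (t - u) ^ k * g t := by
  have hv : 0 ≤ v := hu.trans huv
  have step1 : ∫ t in Ioi v, (t - v) ^ k * g t ≤ ∫ t in Ioi v, (t - u) ^ k * g t := by
    apply setIntegral_mono_on (aux_integrable_s12 hg hmom k hv)
      ((aux_integrable_s12 hg hmom k hu).mono_set (Ioi_subset_Ioi huv)) measurableSet_Ioi
    intro t ht
    simp only [mem_Ioi] at ht
    exact mul_le_mul_of_nonneg_right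
      (pow_le_pow_left₀ (by linarith) (by linarith) k) (hg t)
  refine step1.trans ?_
  apply setIntegral_mono_set (aux_integrable_s12 hg hmom k hu)
  · filter_upwards [ae_restrict_mem measurableSet_Ioi] with t ht
    exact mul_nonneg (pow_nonneg (by simp at ht; linarith) k) (hg t)
  · exact HasSubset.Subset.eventuallyLE (Ioi_subset_Ioi huv)
lemma aux_fubini {g : ℝ → ℝ} (hg : ∀ t, 0 ≤ g t)
    (hmom : ∀ k : ℕ, IntegrableOn (fun t => t ^ k * g t) (Ioi 0)) (r : ℕ)
    {x : ℝ} (hx : 0 ≤ x) :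
    IntegrableOn (fun u => ∫ t in Ioi u, (t - u) ^ r * g t) (Ioi x) ∧
    ∫ t in Ioi x, (t - x) ^ (r + 1) * g t
      = ((r : ℝ) + 1) * ∫ u in Ioi x, ∫ t in Ioi u, (t - u) ^ r * g t := by
  set A : ℝ → ℝ := fun u => ∫ t in Ioi u, (t - u) ^ r * g t with hA
  set F : ℝ × ℝ → ℝ≥0∞ := fun p =>
    Set.indicator {q : ℝ × ℝ | q.2 < q.1}
      (fun q => ENNReal.ofReal ((q.1 - q.2) ^ r * g q.1)) p with hF
  have hAnn : ∀ u, 0 ≤ A u := fun u => aux_tail_nonneg hg r u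
  -- pointwise step
  have hpt : ∀ t, x < t →
      ENNReal.ofReal ((t - x) ^ (r + 1) * g t)
        = ((r : ℝ≥0∞) + 1) * ∫⁻ u in Ioi x, F (t, u) := by
    intro t hxt
    have h1 : ∀ u : ℝ, F (t, u) = (Iio t).indicator
        (fun u => ENNReal.ofReal ((t - u) ^ r * g t)) u := by
      intro u
      by_cases h : u < t <;> simp [hF, Set.indicator, h]
    have h2 : ∫⁻ u in Ioi x, F (t, u)
        = ∫⁻ u in Ioo x t, ENNReal.ofReal ((t - u) ^ r * g t) := by
      simp only [h1]
      rw [lintegral_indicator measurableSet_Iio, Measure.restrict_restrict measurableSet_Iio]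
      rw [Set.Iio_inter_Ioi]
    have hint : IntegrableOn (fun u => (t - u) ^ r * g t) (Ioo x t) :=
      ((((continuous_const.sub continuous_id).pow r).mul
        continuous_const).integrableOn_Icc).mono_set Ioo_subset_Icc_self
    have hnn : 0 ≤ᵐ[volume.restrict (Ioo x t)] fun u => (t - u) ^ r * g t := by
      filter_upwards [ae_restrict_mem measurableSet_Ioo] with u hu
      exact mul_nonneg (pow_nonneg (by simp at hu; linarith [hu.2]) r) (hg t)
    have h3 : ∫⁻ u in Ioo x t, ENNReal.ofReal ((t - u) ^ r * g t)
        = ENNReal.ofReal (∫ u in Ioo x t, (t - u) ^ r * g t) :=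
      (ofReal_integral_eq_lintegral_ofReal hint hnn).symm
    have h4 : ∫ u in Ioo x t, (t - u) ^ r * g t = ((t - x) ^ (r + 1) / (r + 1)) * g t := by
      rw [← integral_Ioc_eq_integral_Ioo, ← intervalIntegral.integral_of_le hxt.le]
      rw [intervalIntegral.integral_mul_const]
      congr 1
      have h5 : (∫ u in x..t, (t - u) ^ r) = ∫ w in (t - t)..(t - x), w ^ r :=
        intervalIntegral.integral_comp_sub_left (fun w => w ^ r) t
      rw [h5]
      simp [integral_pow]
    rw [h2, h3, h4]
    have hcast : ENNReal.ofReal ((r : ℝ) + 1) = (r : ℝ≥0∞) + 1 := by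
      rw [show ((r:ℝ)+1) = ((r+1:ℕ):ℝ) by push_cast; ring, ENNReal.ofReal_natCast]
      push_cast; ring
    rw [← hcast, ← ENNReal.ofReal_mul (by positivity)]
    congr 1
    have hne : (r : ℝ) + 1 ≠ 0 := by positivity
    field_simp
  -- measurability of F
  have hFmeas : AEMeasurable F ((volume.restrict (Ioi x)).prod (volume.restrict (Ioi x))) := by
    apply AEMeasurable.indicator _ (measurableSet_lt measurable_snd measurable_fst)
    apply ENNReal.measurable_ofReal.comp_aemeasurable
    apply AEMeasurable.mul
    · exact ((continuous_fst.sub continuous_snd).pow r).measurable.aemeasurable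
    · exact (aux_aesm hmom hx).aemeasurable.comp_quasiMeasurePreserving
        Measure.quasiMeasurePreserving_fst
  -- inner eval after swap
  have hinner : ∀ u, x < u → ∫⁻ t in Ioi x, F (t, u) = ENNReal.ofReal (A u) := by
    intro u hxu
    have hu0 : (0:ℝ) ≤ u := le_trans hx hxu.le
    have h1 : ∀ t : ℝ, F (t, u) = (Ioi u).indicator
        (fun t => ENNReal.ofReal ((t - u) ^ r * g t)) t := by
      intro t
      by_cases h : u < t <;> simp [hF, Set.indicator, h]
    simp only [h1]
    rw [lintegral_indicator measurableSet_Ioi, Measure.restrict_restrict measurableSet_Ioi]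
    rw [Set.Ioi_inter_Ioi, max_eq_left hxu.le]
    refine (ofReal_integral_eq_lintegral_ofReal (aux_integrable_s12 hg hmom r hu0) ?_).symm
    filter_upwards [ae_restrict_mem measurableSet_Ioi] with t ht
    exact mul_nonneg (pow_nonneg (by simp at ht; linarith) r) (hg t)
  -- the key ENNReal identity
  have key : ENNReal.ofReal (∫ t in Ioi x, (t - x) ^ (r + 1) * g t)
      = ((r : ℝ≥0∞) + 1) * ∫⁻ u in Ioi x, ENNReal.ofReal (A u) := by
    calc ENNReal.ofReal (∫ t in Ioi x, (t - x) ^ (r + 1) * g t)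
        = ∫⁻ t in Ioi x, ENNReal.ofReal ((t - x) ^ (r + 1) * g t) := by
          refine ofReal_integral_eq_lintegral_ofReal (aux_integrable_s12 hg hmom (r+1) hx) ?_
          filter_upwards [ae_restrict_mem measurableSet_Ioi] with t ht
          exact mul_nonneg (pow_nonneg (by simp at ht; linarith) (r+1)) (hg t)
      _ = ∫⁻ t in Ioi x, ((r : ℝ≥0∞) + 1) * ∫⁻ u in Ioi x, F (t, u) := by
          apply lintegral_congr_ae
          filter_upwards [ae_restrict_mem measurableSet_Ioi] with t ht
          exact hpt t ht
      _ = ((r : ℝ≥0∞) + 1) * ∫⁻ t in Ioi x, ∫⁻ u in Ioi x, F (t, u) :=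
          lintegral_const_mul' _ _ (by simp)
      _ = ((r : ℝ≥0∞) + 1) * ∫⁻ u in Ioi x, ∫⁻ t in Ioi x, F (t, u) := by
          rw [lintegral_lintegral_swap hFmeas]
      _ = ((r : ℝ≥0∞) + 1) * ∫⁻ u in Ioi x, ENNReal.ofReal (A u) := by
          congr 1
          apply lintegral_congr_ae
          filter_upwards [ae_restrict_mem measurableSet_Ioi] with u hu
          exact hinner u hu
  -- integrability of A
  have hfin : ∫⁻ u in Ioi x, ENNReal.ofReal (A u) < ⊤ := by
    have h1 : ∫⁻ u in Ioi x, ENNReal.ofReal (A u)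
        ≤ ((r : ℝ≥0∞) + 1) * ∫⁻ u in Ioi x, ENNReal.ofReal (A u) := by
      nth_rewrite 1 [← one_mul (∫⁻ u in Ioi x, ENNReal.ofReal (A u))]
      exact mul_le_mul_left (by simp) _
    rw [← key] at h1
    exact lt_of_le_of_lt h1 ENNReal.ofReal_lt_top
  have hAmeas : AEStronglyMeasurable A (volume.restrict (Ioi x)) := by
    have hanti : Antitone (fun u => A (max u 0)) := by
      intro u v huv
      exact aux_antitone hg hmom r (le_max_right u 0) (max_le_max huv le_rfl)
    refine (hanti.measurable.aestronglyMeasurable).congr ?_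
    filter_upwards [ae_restrict_mem measurableSet_Ioi] with u hu
    show A (max u 0) = A u
    rw [max_eq_left (le_trans hx (le_of_lt hu))]
  have hAint : IntegrableOn A (Ioi x) := by
    refine ⟨hAmeas, ?_⟩
    rw [hasFiniteIntegral_iff_ofReal ?_]
    · exact hfin
    · filter_upwards with u using hAnn u
  refine ⟨hAint, ?_⟩
  have hr : ENNReal.ofReal (((r:ℝ) + 1) * ∫ u in Ioi x, A u)
      = ((r : ℝ≥0∞) + 1) * ∫⁻ u in Ioi x, ENNReal.ofReal (A u) := by
    rw [ENNReal.ofReal_mul (by positivity)]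
    congr 1
    · rw [show ((r:ℝ)+1) = ((r+1:ℕ):ℝ) by push_cast; ring, ENNReal.ofReal_natCast]
      push_cast; ring
    · exact ofReal_integral_eq_lintegral_ofReal hAint
        (Filter.Eventually.of_forall hAnn)
  rw [← hr] at key
  have h2 : 0 ≤ ((r:ℝ) + 1) * ∫ u in Ioi x, A u :=
    mul_nonneg (by positivity) (setIntegral_nonneg measurableSet_Ioi fun u _ => hAnn u)
  exact (ENNReal.ofReal_eq_ofReal_iff (aux_tail_nonneg hg (r+1) x) h2).mp key

/-- The s-FR order is hereditary in the iteration step: if `T̄_{Y,s}/T̄_{X,s}` is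
nondecreasing on `[0,∞)`, then so is `T̄_{Y,s+1}/T̄_{X,s+1}`. -/
theorem sFR_hereditary
    (fX fY : ℝ → ℝ) (hX_nonneg : ∀ t, 0 ≤ fX t) (hY_nonneg : ∀ t, 0 ≤ fY t)
    (hX_prob : ∫ t in Ioi (0 : ℝ), fX t = 1) (hY_prob : ∫ t in Ioi (0 : ℝ), fY t = 1)
    (hX_mom : ∀ k : ℕ, IntegrableOn (fun t => t ^ k * fX t) (Ioi 0))
    (hY_mom : ∀ k : ℕ, IntegrableOn (fun t => t ^ k * fY t) (Ioi 0))
    (s : ℕ) (hs : 1 ≤ s)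
    (h : MonotoneOn (fun x => iterTail fY s x / iterTail fX s x) (Ici 0)) :
    MonotoneOn (fun x => iterTail fY (s + 1) x / iterTail fX (s + 1) x) (Ici 0) := by
  obtain ⟨r, rfl⟩ : ∃ r, s = r + 1 := ⟨s - 1, (Nat.succ_pred_eq_of_pos hs).symm⟩
  set AY : ℝ → ℝ := fun u => ∫ t in Ioi u, (t - u) ^ r * fY t with hAYdef
  set AX : ℝ → ℝ := fun u => ∫ t in Ioi u, (t - u) ^ r * fX t with hAXdef
  set AY1 : ℝ → ℝ := fun u => ∫ t in Ioi u, (t - u) ^ (r + 1) * fY t with hAY1def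
  set AX1 : ℝ → ℝ := fun u => ∫ t in Ioi u, (t - u) ^ (r + 1) * fX t with hAX1def
  set DY : ℝ := ∫ t in Ioi (0:ℝ), t ^ r * fY t with hDYdef
  set DX : ℝ := ∫ t in Ioi (0:ℝ), t ^ r * fX t with hDXdef
  set DY1 : ℝ := ∫ t in Ioi (0:ℝ), t ^ (r + 1) * fY t with hDY1def
  set DX1 : ℝ := ∫ t in Ioi (0:ℝ), t ^ (r + 1) * fX t with hDX1def
  have hDY : 0 < DY := aux_mom_pos hY_nonneg hY_prob hY_mom r
  have hDX : 0 < DX := aux_mom_pos hX_nonneg hX_prob hX_mom r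
  have hDY1 : 0 < DY1 := aux_mom_pos hY_nonneg hY_prob hY_mom (r + 1)
  have hDX1 : 0 < DX1 := aux_mom_pos hX_nonneg hX_prob hX_mom (r + 1)
  have hAYnn : ∀ u, 0 ≤ AY u := fun u => aux_tail_nonneg hY_nonneg r u
  have hAXnn : ∀ u, 0 ≤ AX u := fun u => aux_tail_nonneg hX_nonneg r u
  have hAY1nn : ∀ u, 0 ≤ AY1 u := fun u => aux_tail_nonneg hY_nonneg (r + 1) u
  have hAX1nn : ∀ u, 0 ≤ AX1 u := fun u => aux_tail_nonneg hX_nonneg (r + 1) u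
  have hmono : ∀ u v : ℝ, 0 ≤ u → u ≤ v →
      (AY u / DY) / (AX u / DX) ≤ (AY v / DY) / (AX v / DX) := by
    intro u v hu huv
    have := h (a := u) (b := v) hu (hu.trans huv) huv
    simpa [iterTail, Nat.add_sub_cancel, hAYdef, hAXdef, hDYdef, hDXdef] using this
  -- vanishing claim
  have claimY0 : ∀ u : ℝ, 0 ≤ u → AX u ≠ 0 → (∀ v, ∃ w, v ≤ w ∧ AX w = 0) → AY u = 0 := by
    intro u hu hAXu hex
    obtain ⟨w, huw, hw0⟩ := hex u
    have h1 := hmono u w hu huw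
    rw [hw0] at h1
    simp only [zero_div, div_zero] at h1
    have h2 : 0 ≤ (AY u / DY) / (AX u / DX) :=
      div_nonneg (div_nonneg (hAYnn u) hDY.le) (div_nonneg (hAXnn u) hDX.le)
    have h3 : (AY u / DY) / (AX u / DX) = 0 := le_antisymm h1 h2
    rcases div_eq_zero_iff.mp h3 with h4 | h4
    · rcases div_eq_zero_iff.mp h4 with h5 | h5
      · exact h5
      · exact absurd h5 hDY.ne'
    · exact absurd h4 (div_ne_zero hAXu hDX.ne')
  -- cross inequality at level s
  have crossS : ∀ u v : ℝ, 0 ≤ u → u ≤ v → AY u * AX v ≤ AY v * AX u := by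
    intro u v hu huv
    by_cases hAXv : AX v = 0
    · rw [hAXv, mul_zero]
      exact mul_nonneg (hAYnn v) (hAXnn u)
    · have hAXvpos : 0 < AX v := (hAXnn v).lt_of_ne (Ne.symm hAXv)
      have hAXupos : 0 < AX u := lt_of_lt_of_le hAXvpos (aux_antitone hX_nonneg hX_mom r hu huv)
      have h1 := hmono u v hu huv
      rw [div_le_div_iff₀ (by positivity) (by positivity)] at h1
      rw [div_mul_div_comm, div_mul_div_comm, div_le_div_iff₀ (by positivity) (by positivity)] at h1
      exact le_of_mul_le_mul_right (by linarith) (by positivity : (0:ℝ) < DY * DX)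
  intro x hx y hy hxy
  simp only [mem_Ici] at hx hy
  obtain ⟨hAYintx, hAY1x⟩ := aux_fubini hY_nonneg hY_mom r hx
  obtain ⟨hAXintx, hAX1x⟩ := aux_fubini hX_nonneg hX_mom r hx
  obtain ⟨hAYinty, hAY1y⟩ := aux_fubini hY_nonneg hY_mom r hy
  obtain ⟨hAXinty, hAX1y⟩ := aux_fubini hX_nonneg hX_mom r hy
  replace hAYintx : IntegrableOn AY (Ioi x) := hAYintx
  replace hAXintx : IntegrableOn AX (Ioi x) := hAXintx
  replace hAYinty : IntegrableOn AY (Ioi y) := hAYinty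
  replace hAXinty : IntegrableOn AX (Ioi y) := hAXinty
  replace hAY1x : AY1 x = ((r:ℝ) + 1) * ∫ u in Ioi x, AY u := hAY1x
  replace hAX1x : AX1 x = ((r:ℝ) + 1) * ∫ u in Ioi x, AX u := hAX1x
  replace hAY1y : AY1 y = ((r:ℝ) + 1) * ∫ u in Ioi y, AY u := hAY1y
  replace hAX1y : AX1 y = ((r:ℝ) + 1) * ∫ u in Ioi y, AX u := hAX1y
  simp only [iterTail, Nat.add_sub_cancel]
  show (AY1 x / DY1) / (AX1 x / DX1) ≤ (AY1 y / DY1) / (AX1 y / DX1)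
  by_cases hq : AX1 y = 0
  · rw [hq]
    simp only [zero_div, div_zero]
    by_cases hp : AX1 x = 0
    · rw [hp]; simp
    · have hAX1xpos : 0 < AX1 x := (hAX1nn x).lt_of_ne (Ne.symm hp)
      -- there is a point u₀ > x with AX u₀ > 0
      have hex : ∃ u₀, x < u₀ ∧ 0 < AX u₀ := by
        by_contra hc
        push_neg at hc
        have hzero : ∀ u ∈ Ioi x, AX u = 0 := fun u hu =>
          le_antisymm (hc u hu) (hAXnn u)
        have : ∫ u in Ioi x, AX u = 0 := by
          rw [setIntegral_congr_fun measurableSet_Ioi hzero]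
          simp
        rw [hAX1x, this, mul_zero] at hp
        exact hp rfl
      obtain ⟨u₀, hxu₀, hAXu₀⟩ := hex
      -- AX vanishes beyond any point (from AX1 y = 0)
      have hIXy0 : ∫ u in Ioi y, AX u = 0 := by
        have h1 : ((r:ℝ) + 1) * ∫ u in Ioi y, AX u = 0 := by rw [← hAX1y]; exact hq
        have h2 : ((r:ℝ) + 1) ≠ 0 := by positivity
        exact (mul_eq_zero.mp h1).resolve_left h2
      have hAXzero : ∀ v, y < v → AX v = 0 := by
        intro v hv
        by_contra hc
        have hAXvpos : 0 < AX v := (hAXnn v).lt_of_ne (Ne.symm hc)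
        have hle1 : ∫ u in Ioc y v, AX u ≤ ∫ u in Ioi y, AX u := by
          apply setIntegral_mono_set hAXinty
          · exact Filter.Eventually.of_forall hAXnn
          · exact HasSubset.Subset.eventuallyLE Ioc_subset_Ioi_self
        have hle2 : (v - y) * AX v ≤ ∫ u in Ioc y v, AX u := by
          have : ∫ _ in Ioc y v, AX v = (v - y) * AX v := by
            rw [setIntegral_const]
            rw [measureReal_def, Real.volume_Ioc, ENNReal.toReal_ofReal (by linarith), smul_eq_mul]
          rw [← this]
          apply setIntegral_mono_on
          · exact integrableOn_const (by rw [Real.volume_Ioc]; exact ENNReal.ofReal_ne_top)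
          · exact hAXinty.mono_set Ioc_subset_Ioi_self
          · exact measurableSet_Ioc
          · intro u hu
            exact aux_antitone hX_nonneg hX_mom r (hy.trans (le_of_lt hu.1)) hu.2
        have : (0:ℝ) < ∫ u in Ioi y, AX u := by
          have : (0:ℝ) < (v - y) * AX v := mul_pos (by linarith) hAXvpos
          linarith
        rw [hIXy0] at this
        exact lt_irrefl 0 this
      have hexzero : ∀ v, ∃ w, v ≤ w ∧ AX w = 0 := by
        intro v
        refine ⟨max v (y + 1), le_max_left _ _, hAXzero _ ?_⟩
        have := le_max_right v (y + 1)
        linarith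
      -- AY vanishes on Ioi x
      have hAYzero : ∀ u, x < u → AY u = 0 := by
        intro u hu
        rcases le_or_gt u u₀ with hcase | hcase
        · have hAXupos : 0 < AX u :=
            lt_of_lt_of_le hAXu₀ (aux_antitone hX_nonneg hX_mom r (hx.trans hu.le) hcase)
          exact claimY0 u (hx.trans hu.le) hAXupos.ne' hexzero
        · have hAYu₀ : AY u₀ = 0 :=
            claimY0 u₀ (hx.trans hxu₀.le) hAXu₀.ne' hexzero
          have : AY u ≤ AY u₀ :=
            aux_antitone hY_nonneg hY_mom r (hx.trans hxu₀.le) hcase.le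
          exact le_antisymm (by rw [← hAYu₀]; exact this) (hAYnn u)
      have hAY1x0 : AY1 x = 0 := by
        rw [hAY1x]
        have : ∫ u in Ioi x, AY u = 0 := by
          rw [setIntegral_congr_fun measurableSet_Ioi (fun u hu => hAYzero u hu)]
          simp
        rw [this, mul_zero]
      rw [hAY1x0]
      simp
  · have hAX1ypos : 0 < AX1 y := (hAX1nn y).lt_of_ne (Ne.symm hq)
    have hAX1xpos : 0 < AX1 x :=
      lt_of_lt_of_le hAX1ypos (aux_antitone hX_nonneg hX_mom (r + 1) hx hxy)
    -- cross inequality at level s+1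
    have hsplit : ∀ (B : ℝ → ℝ), IntegrableOn B (Ioi x) →
        ∫ u in Ioi x, B u = (∫ u in Ioc x y, B u) + ∫ u in Ioi y, B u := by
      intro B hB
      rw [← setIntegral_union (Set.Ioc_disjoint_Ioi le_rfl) measurableSet_Ioi
        (hB.mono_set Ioc_subset_Ioi_self) (hB.mono_set (Ioi_subset_Ioi hxy)),
        Ioc_union_Ioi_eq_Ioi hxy]
    have hprod : (∫ u in Ioc x y, AY u) * (∫ v in Ioi y, AX v)
        ≤ (∫ u in Ioc x y, AX u) * (∫ v in Ioi y, AY v) := by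
      rw [← integral_prod_mul, ← integral_prod_mul]
      apply integral_mono_ae
      · exact Integrable.mul_prod (hAYintx.mono_set Ioc_subset_Ioi_self) hAXinty
      · exact Integrable.mul_prod (hAXintx.mono_set Ioc_subset_Ioi_self) hAYinty
      · rw [Measure.prod_restrict]
        filter_upwards [ae_restrict_mem (measurableSet_Ioc.prod measurableSet_Ioi)] with p hp
        obtain ⟨hp1, hp2⟩ := hp
        simp only [mem_Ioc] at hp1
        simp only [mem_Ioi] at hp2
        have := crossS p.1 p.2 (hx.trans hp1.1.le) (hp1.2.trans hp2.le)
        linarith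
    have cross1 : AY1 x * AX1 y ≤ AY1 y * AX1 x := by
      rw [hAY1x, hAX1y, hAY1y, hAX1x,
        hsplit AY hAYintx, hsplit AX hAXintx]
      have hr1 : (0:ℝ) ≤ (r:ℝ) + 1 := by positivity
      have nn1 : (0:ℝ) ≤ ∫ v in Ioi y, AY v :=
        setIntegral_nonneg measurableSet_Ioi (fun v _ => hAYnn v)
      have nn2 : (0:ℝ) ≤ ∫ v in Ioi y, AX v :=
        setIntegral_nonneg measurableSet_Ioi (fun v _ => hAXnn v)
      have nn3 : (0:ℝ) ≤ ∫ v in Ioc x y, AY v :=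
        setIntegral_nonneg measurableSet_Ioc (fun v _ => hAYnn v)
      have nn4 : (0:ℝ) ≤ ∫ v in Ioc x y, AX v :=
        setIntegral_nonneg measurableSet_Ioc (fun v _ => hAXnn v)
      nlinarith [hprod, nn1, nn2, nn3, nn4, sq_nonneg ((r:ℝ) + 1)]
    have final : ∀ a b c d e f : ℝ, 0 < e → 0 < f → 0 < c → 0 < d →
        a * d ≤ b * c → (a / e) / (c / f) ≤ (b / e) / (d / f) := by
      intro a b c d e f he hf hc hd habcd
      have h1 : a / c ≤ b / d := (div_le_div_iff₀ hc hd).mpr habcd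
      calc (a / e) / (c / f) = (a / c) / (e / f) := by rw [div_div_div_comm]
        _ ≤ (b / d) / (e / f) := by
            rw [div_eq_mul_inv (a / c), div_eq_mul_inv (b / d)]
            exact mul_le_mul_of_nonneg_right h1 (by positivity)
        _ = (b / e) / (d / f) := by rw [div_div_div_comm]
    exact final _ _ _ _ _ _ hDY1 hDX1 hAX1xpos hAX1ypos cross1
end

section
/- Let X ~ Gamma(α, 1) with arbitrary shape α > 0. Then for each fixed x ≥ 0, lim_{s→∞} T̄_s(x) = e^{−x}, where T̄_s is the s-iterated tail induced by X. -/
open MeasureTheory Set Real Filter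

private lemma me_add (x : ℝ) : MeasurableEmbedding fun u : ℝ => u + x :=
  (Homeomorph.addRight x).isClosedEmbedding.measurableEmbedding

private lemma preimage_add_Ioi (x : ℝ) : (fun u : ℝ => u + x) ⁻¹' (Ioi x) = Ioi 0 := by
  ext u; simp

private lemma shift_setIntegral (x : ℝ) (f : ℝ → ℝ) :
    ∫ t in Ioi x, f t = ∫ u in Ioi (0:ℝ), f (u + x) := by
  conv_lhs => rw [← map_add_right_eq_self volume x]
  rw [(me_add x).setIntegral_map, preimage_add_Ioi]

private lemma shift_integrableOn (x : ℝ) (f : ℝ → ℝ) :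
    IntegrableOn f (Ioi x) ↔ IntegrableOn (fun u => f (u + x)) (Ioi 0) := by
  have h := (me_add x).integrableOn_map_iff (f := f) (μ := volume) (s := Ioi x)
  rw [map_add_right_eq_self, preimage_add_Ioi] at h
  exact h

/-- integrability of `(t-x)^q e^{-t}` on `Ioi x`. -/
private lemma integrableOn_shift_rpow (x : ℝ) {q : ℝ} (hq : -1 < q) :
    IntegrableOn (fun t => (t - x) ^ q * Real.exp (-t)) (Ioi x) := by
  rw [shift_integrableOn]
  have h0 : (0:ℝ) < q + 1 := by linarith
  have h1 := Real.GammaIntegral_convergent h0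
  simp only [add_sub_cancel_right] at h1
  have h2 : IntegrableOn (fun u : ℝ => Real.exp (-x) * (Real.exp (-u) * u ^ q)) (Ioi 0) :=
    h1.const_mul _
  refine h2.congr_fun ?_ measurableSet_Ioi
  intro u _
  simp only [add_sub_cancel_right, neg_add, Real.exp_add]
  ring

/-- `∫_x^∞ (t-x)^q e^{-t} dt = e^{-x} Γ(q+1)`. -/
private lemma integral_shift_rpow (x : ℝ) {q : ℝ} (hq : -1 < q) :
    ∫ t in Ioi x, (t - x) ^ q * Real.exp (-t) = Real.exp (-x) * Real.Gamma (q + 1) := by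
  rw [shift_setIntegral, Real.Gamma_eq_integral (by linarith : (0:ℝ) < q + 1),
    ← integral_const_mul]
  refine setIntegral_congr_fun measurableSet_Ioi fun u _ => ?_
  simp only [add_sub_cancel_right, neg_add, Real.exp_add]
  ring

private lemma aesm_aux (x : ℝ) (hx : 0 ≤ x) (r q : ℝ) :
    AEStronglyMeasurable (fun t : ℝ => (t - x) ^ r * (t ^ q * Real.exp (-t)))
      (volume.restrict (Ioi x)) := by
  refine ContinuousOn.aestronglyMeasurable ?_ measurableSet_Ioi
  intro t ht
  have htx : x < t := ht
  have ht0 : 0 < t := lt_of_le_of_lt hx htx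
  apply ContinuousWithinAt.mul
  · exact (ContinuousAt.rpow_const ((continuous_id.sub continuous_const).continuousAt)
      (Or.inl (ne_of_gt (sub_pos.2 htx)))).continuousWithinAt
  · exact (ContinuousAt.mul (Real.continuousAt_rpow_const t q (Or.inl ht0.ne'))
      ((Real.continuous_exp.comp continuous_neg).continuousAt)).continuousWithinAt

/-- domination + value bound: for `0 ≤ r`, `-1 < r + q`, `0 ≤ x`, the function
`(t-x)^r t^q e^{-t}` is integrable on `Ioi x` and its integral is at most `Γ(r+q+1)`. -/
private lemma integrable_and_bound (x : ℝ) (hx : 0 ≤ x) {r q : ℝ} (hr : 0 ≤ r)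
    (h : -1 < r + q) :
    IntegrableOn (fun t => (t - x) ^ r * (t ^ q * Real.exp (-t))) (Ioi x) ∧
      ∫ t in Ioi x, (t - x) ^ r * (t ^ q * Real.exp (-t)) ≤ Real.Gamma (r + q + 1) := by
  have h0 : (0:ℝ) < r + q + 1 := by linarith
  have hg0 : IntegrableOn (fun t : ℝ => Real.exp (-t) * t ^ (r + q)) (Ioi 0) := by
    have := Real.GammaIntegral_convergent h0
    simpa using this
  have hsub : Ioi x ⊆ Ioi (0:ℝ) := Ioi_subset_Ioi hx
  have hg : IntegrableOn (fun t : ℝ => Real.exp (-t) * t ^ (r + q)) (Ioi x) :=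
    hg0.mono_set hsub
  have hle : ∀ t ∈ Ioi x, (t - x) ^ r * (t ^ q * Real.exp (-t)) ≤ Real.exp (-t) * t ^ (r + q) := by
    intro t ht
    have htx : x < t := ht
    have ht0 : 0 < t := lt_of_le_of_lt hx htx
    have h1 : (t - x) ^ r ≤ t ^ r :=
      Real.rpow_le_rpow (by linarith) (by linarith) hr
    have h2 : t ^ (r + q) = t ^ r * t ^ q := Real.rpow_add ht0 r q
    rw [h2]
    have h3 : (0:ℝ) ≤ t ^ q * Real.exp (-t) :=
      mul_nonneg (Real.rpow_nonneg ht0.le _) (Real.exp_pos _).le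
    calc (t - x) ^ r * (t ^ q * Real.exp (-t)) ≤ t ^ r * (t ^ q * Real.exp (-t)) :=
          mul_le_mul_of_nonneg_right h1 h3
      _ = Real.exp (-t) * (t ^ r * t ^ q) := by ring
  have hnn : ∀ t ∈ Ioi x, 0 ≤ (t - x) ^ r * (t ^ q * Real.exp (-t)) := by
    intro t ht
    have htx : x < t := ht
    have ht0 : 0 < t := lt_of_le_of_lt hx htx
    exact mul_nonneg (Real.rpow_nonneg (by linarith) _)
      (mul_nonneg (Real.rpow_nonneg ht0.le _) (Real.exp_pos _).le)
  have hf : IntegrableOn (fun t => (t - x) ^ r * (t ^ q * Real.exp (-t))) (Ioi x) := by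
    refine Integrable.mono hg (aesm_aux x hx r q) ?_
    filter_upwards [ae_restrict_mem measurableSet_Ioi] with t ht
    rw [Real.norm_eq_abs, Real.norm_eq_abs, abs_of_nonneg (hnn t ht)]
    refine le_trans (hle t ht) (le_abs_self _)
  refine ⟨hf, ?_⟩
  calc ∫ t in Ioi x, (t - x) ^ r * (t ^ q * Real.exp (-t))
      ≤ ∫ t in Ioi x, Real.exp (-t) * t ^ (r + q) :=
        setIntegral_mono_on hf hg measurableSet_Ioi hle
    _ ≤ ∫ t in Ioi 0, Real.exp (-t) * t ^ (r + q) := by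
        refine setIntegral_mono_set hg0 ?_ (HasSubset.Subset.eventuallyLE hsub)
        filter_upwards [ae_restrict_mem measurableSet_Ioi] with t ht
        exact mul_nonneg (Real.exp_pos _).le (Real.rpow_nonneg (le_of_lt ht) _)
    _ = Real.Gamma (r + q + 1) := by
        rw [Real.Gamma_eq_integral h0]; simp

private lemma rpow_diff_le {b c : ℝ} (hb : 0 < b) (hbc : b ≤ c) (p : ℝ) :
    |c ^ p - b ^ p| ≤ |p| * (b ^ (p - 1) + c ^ (p - 1)) * (c - b) := by
  have hC : ∀ ξ ∈ Icc b c, ‖p * ξ ^ (p - 1)‖ ≤ |p| * (b ^ (p - 1) + c ^ (p - 1)) := by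
    intro ξ hξ
    have hξ0 : 0 < ξ := lt_of_lt_of_le hb hξ.1
    rw [norm_mul, Real.norm_eq_abs, Real.norm_eq_abs,
      abs_of_nonneg (Real.rpow_nonneg hξ0.le _)]
    refine mul_le_mul_of_nonneg_left ?_ (abs_nonneg p)
    rcases le_or_gt (p - 1) 0 with h | h
    · have h1 : ξ ^ (p - 1) ≤ b ^ (p - 1) :=
        Real.rpow_le_rpow_of_nonpos hb hξ.1 h
      have h2 : (0:ℝ) ≤ c ^ (p - 1) := Real.rpow_nonneg (le_trans hb.le hbc) _
      linarith
    · have h1 : ξ ^ (p - 1) ≤ c ^ (p - 1) := Real.rpow_le_rpow hξ0.le hξ.2 h.le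
      have h2 : (0:ℝ) ≤ b ^ (p - 1) := Real.rpow_nonneg hb.le _
      linarith
  have hd : ∀ ξ ∈ Icc b c,
      HasDerivWithinAt (fun y : ℝ => y ^ p) (p * ξ ^ (p - 1)) (Icc b c) ξ := by
    intro ξ hξ
    have hξ0 : 0 < ξ := lt_of_lt_of_le hb hξ.1
    exact (Real.hasDerivAt_rpow_const (Or.inl hξ0.ne')).hasDerivWithinAt
  have key := (convex_Icc b c).norm_image_sub_le_of_norm_hasDerivWithin_le hd hC
    (left_mem_Icc.2 hbc) (right_mem_Icc.2 hbc)
  rw [Real.norm_eq_abs, Real.norm_eq_abs, abs_of_nonneg (sub_nonneg.2 hbc)] at key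
  exact key

private lemma key_bound (a : ℝ) (ha : 0 < a) (x : ℝ) (hx : 0 ≤ x) (s : ℕ) (hs : 2 ≤ s) :
    |(∫ t in Ioi x, (t - x) ^ (s - 1) * (t ^ (a - 1) * Real.exp (-t))) -
        Real.exp (-x) * Real.Gamma (a + s - 1)| ≤
      2 * |a - 1| * x * Real.Gamma (a + s - 2) := by
  have hσ : (2:ℝ) ≤ (s:ℝ) := by exact_mod_cast hs
  have hcast : ((s - 1 : ℕ) : ℝ) = (s:ℝ) - 1 := by
    have h1 : (1:ℕ) ≤ s := by omega
    push_cast [h1]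
    ring
  -- convert npow to rpow
  have hJ : (∫ t in Ioi x, (t - x) ^ (s - 1) * (t ^ (a - 1) * Real.exp (-t)))
      = ∫ t in Ioi x, (t - x) ^ ((s:ℝ) - 1) * (t ^ (a - 1) * Real.exp (-t)) := by
    refine (setIntegral_congr_fun measurableSet_Ioi fun t ht => ?_).symm
    rw [← hcast, Real.rpow_natCast]
  -- the main comparison function
  have hFib := integrable_and_bound x hx (r := (s:ℝ) - 1) (q := a - 1)
    (by linarith) (by linarith)
  have hF : IntegrableOn (fun t => (t - x) ^ ((s:ℝ) - 1) * (t ^ (a - 1) * Real.exp (-t)))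
      (Ioi x) := hFib.1
  have hG : IntegrableOn (fun t => (t - x) ^ ((s:ℝ) + a - 2) * Real.exp (-t)) (Ioi x) :=
    integrableOn_shift_rpow x (by linarith)
  have hGval : ∫ t in Ioi x, (t - x) ^ ((s:ℝ) + a - 2) * Real.exp (-t)
      = Real.exp (-x) * Real.Gamma (a + s - 1) := by
    rw [integral_shift_rpow x (by linarith : (-1:ℝ) < (s:ℝ) + a - 2)]
    congr 1
    congr 1
    ring
  have hH1ib := integrable_and_bound x hx (r := (s:ℝ) - 1) (q := a - 2)
    (by linarith) (by linarith)
  have hH1 := hH1ib.1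
  have hH1val : ∫ t in Ioi x, (t - x) ^ ((s:ℝ) - 1) * (t ^ (a - 2) * Real.exp (-t))
      ≤ Real.Gamma (a + s - 2) := by
    refine le_trans hH1ib.2 (le_of_eq ?_)
    congr 1
    ring
  have hH2 : IntegrableOn (fun t => (t - x) ^ ((s:ℝ) + a - 3) * Real.exp (-t)) (Ioi x) :=
    integrableOn_shift_rpow x (by linarith)
  have hΓ2pos : 0 < Real.Gamma (a + s - 2) := Real.Gamma_pos_of_pos (by linarith)
  have hH2val : ∫ t in Ioi x, (t - x) ^ ((s:ℝ) + a - 3) * Real.exp (-t)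
      ≤ Real.Gamma (a + s - 2) := by
    rw [integral_shift_rpow x (by linarith : (-1:ℝ) < (s:ℝ) + a - 3)]
    have h1 : Real.exp (-x) ≤ 1 := Real.exp_le_one_iff.2 (by linarith)
    have h2 : Real.Gamma ((s:ℝ) + a - 3 + 1) = Real.Gamma (a + s - 2) := by
      congr 1; ring
    rw [h2]
    nlinarith
  -- pointwise bound
  have hpt : ∀ t ∈ Ioi x,
      |(t - x) ^ ((s:ℝ) - 1) * (t ^ (a - 1) * Real.exp (-t)) -
        (t - x) ^ ((s:ℝ) + a - 2) * Real.exp (-t)| ≤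
      |a - 1| * x * ((t - x) ^ ((s:ℝ) - 1) * (t ^ (a - 2) * Real.exp (-t)) +
        (t - x) ^ ((s:ℝ) + a - 3) * Real.exp (-t)) := by
    intro t ht
    have htx : x < t := ht
    have hb : 0 < t - x := sub_pos.2 htx
    have ht0 : 0 < t := lt_of_le_of_lt hx htx
    have hsplit : (t - x) ^ ((s:ℝ) + a - 2) =
        (t - x) ^ ((s:ℝ) - 1) * (t - x) ^ (a - 1) := by
      rw [← Real.rpow_add hb]; congr 1; ring
    have hsplit3 : (t - x) ^ ((s:ℝ) + a - 3) =
        (t - x) ^ ((s:ℝ) - 1) * (t - x) ^ (a - 2) := by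
      rw [← Real.rpow_add hb]; congr 1; ring
    have hdiff := rpow_diff_le hb (by linarith : t - x ≤ t) (a - 1)
    rw [show t - (t - x) = x by ring] at hdiff
    have hBnn : (0:ℝ) ≤ (t - x) ^ ((s:ℝ) - 1) * Real.exp (-t) :=
      mul_nonneg (Real.rpow_nonneg hb.le _) (Real.exp_pos _).le
    calc |(t - x) ^ ((s:ℝ) - 1) * (t ^ (a - 1) * Real.exp (-t)) -
            (t - x) ^ ((s:ℝ) + a - 2) * Real.exp (-t)|
        = ((t - x) ^ ((s:ℝ) - 1) * Real.exp (-t)) * |t ^ (a - 1) - (t - x) ^ (a - 1)| := by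
          rw [hsplit, ← abs_of_nonneg hBnn, ← abs_mul]
          congr 1
          ring
      _ ≤ ((t - x) ^ ((s:ℝ) - 1) * Real.exp (-t)) *
            (|a - 1| * ((t - x) ^ (a - 1 - 1) + t ^ (a - 1 - 1)) * x) :=
          mul_le_mul_of_nonneg_left hdiff hBnn
      _ = |a - 1| * x * ((t - x) ^ ((s:ℝ) - 1) * (t ^ (a - 2) * Real.exp (-t)) +
            ((t - x) ^ ((s:ℝ) - 1) * (t - x) ^ (a - 2)) * Real.exp (-t)) := by
          rw [show a - 1 - 1 = a - 2 by ring]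
          ring
      _ = _ := by rw [← hsplit3]
  -- assemble
  rw [hJ, ← hGval, ← integral_sub hF hG]
  have habs : |∫ t in Ioi x,
      ((t - x) ^ ((s:ℝ) - 1) * (t ^ (a - 1) * Real.exp (-t)) -
        (t - x) ^ ((s:ℝ) + a - 2) * Real.exp (-t))| ≤
      ∫ t in Ioi x, |(t - x) ^ ((s:ℝ) - 1) * (t ^ (a - 1) * Real.exp (-t)) -
        (t - x) ^ ((s:ℝ) + a - 2) * Real.exp (-t)| := by
    simpa [Real.norm_eq_abs] using
      norm_integral_le_integral_norm (μ := volume.restrict (Ioi x))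
        (f := fun t => (t - x) ^ ((s:ℝ) - 1) * (t ^ (a - 1) * Real.exp (-t)) -
          (t - x) ^ ((s:ℝ) + a - 2) * Real.exp (-t))
  refine le_trans habs ?_
  have hint2 : IntegrableOn (fun t =>
      |a - 1| * x * ((t - x) ^ ((s:ℝ) - 1) * (t ^ (a - 2) * Real.exp (-t)) +
        (t - x) ^ ((s:ℝ) + a - 3) * Real.exp (-t))) (Ioi x) :=
    (hH1.add hH2).const_mul _
  calc (∫ t in Ioi x, |(t - x) ^ ((s:ℝ) - 1) * (t ^ (a - 1) * Real.exp (-t)) -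
          (t - x) ^ ((s:ℝ) + a - 2) * Real.exp (-t)|)
      ≤ ∫ t in Ioi x, |a - 1| * x *
          ((t - x) ^ ((s:ℝ) - 1) * (t ^ (a - 2) * Real.exp (-t)) +
            (t - x) ^ ((s:ℝ) + a - 3) * Real.exp (-t)) :=
        setIntegral_mono_on ((hF.sub hG).abs) hint2 measurableSet_Ioi hpt
    _ = |a - 1| * x * ((∫ t in Ioi x, (t - x) ^ ((s:ℝ) - 1) * (t ^ (a - 2) * Real.exp (-t))) +
          ∫ t in Ioi x, (t - x) ^ ((s:ℝ) + a - 3) * Real.exp (-t)) := by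
        rw [integral_const_mul, integral_add hH1 hH2]
    _ ≤ |a - 1| * x * (Real.Gamma (a + s - 2) + Real.Gamma (a + s - 2)) := by
        have hc : 0 ≤ |a - 1| * x := mul_nonneg (abs_nonneg _) hx
        exact mul_le_mul_of_nonneg_left (add_le_add hH1val hH2val) hc
    _ = 2 * |a - 1| * x * Real.Gamma (a + s - 2) := by ring

/-- Tail of the s-iterated distribution induced by `Gamma(α, 1)` with real shape `α > 0`:
`T̄_s(x) = (1/Γ(α+s-1)) ∫_x^∞ (t-x)^{s-1} t^{α-1} e^{-t} dt`. -/
noncomputable def gammaIterTail (a : ℝ) (s : ℕ) (x : ℝ) : ℝ :=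
  (∫ t in Set.Ioi x, (t - x) ^ (s - 1) * (t ^ (a - 1) * Real.exp (-t))) /
    Real.Gamma (a + (s : ℝ) - 1)

/-- For `X ~ Gamma(α, 1)` with arbitrary shape `α > 0`, the s-iterated tail converges
pointwise to `e^{-x}` as `s → ∞`. -/
theorem iterated_gamma_tail_tendsto_exp (a : ℝ) (ha : 0 < a) (x : ℝ) (hx : 0 ≤ x) :
    Tendsto (fun s : ℕ => gammaIterTail a s x) atTop (nhds (Real.exp (-x))) := by
  have key : ∀ᶠ s : ℕ in atTop,
      |gammaIterTail a s x - Real.exp (-x)| ≤ (2 * |a - 1| * x) / (a + s - 2) := by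
    filter_upwards [eventually_ge_atTop 2] with s hs
    have hσ : (2:ℝ) ≤ (s:ℝ) := by exact_mod_cast hs
    have hpos2 : (0:ℝ) < a + s - 2 := by linarith
    have hΓ2 : 0 < Real.Gamma (a + s - 2) := Real.Gamma_pos_of_pos hpos2
    have hrec : Real.Gamma (a + s - 1) = (a + s - 2) * Real.Gamma (a + s - 2) := by
      have h := Real.Gamma_add_one (ne_of_gt hpos2)
      rw [show a + (s:ℝ) - 2 + 1 = a + s - 1 by ring] at h
      exact h
    have hΓ1 : 0 < Real.Gamma (a + s - 1) := by rw [hrec]; positivity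
    have hb := key_bound a ha x hx s hs
    have heq : gammaIterTail a s x - Real.exp (-x) =
        ((∫ t in Set.Ioi x, (t - x) ^ (s - 1) * (t ^ (a - 1) * Real.exp (-t))) -
          Real.exp (-x) * Real.Gamma (a + s - 1)) / Real.Gamma (a + s - 1) := by
      rw [gammaIterTail]
      field_simp
    rw [heq, abs_div, abs_of_pos hΓ1]
    have step : |(∫ t in Set.Ioi x, (t - x) ^ (s - 1) * (t ^ (a - 1) * Real.exp (-t))) -
          Real.exp (-x) * Real.Gamma (a + s - 1)| / Real.Gamma (a + s - 1)
        ≤ (2 * |a - 1| * x * Real.Gamma (a + s - 2)) / Real.Gamma (a + s - 1) := by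
      gcongr
    refine le_trans step (le_of_eq ?_)
    rw [hrec]
    rw [mul_comm (a + (s:ℝ) - 2) (Real.Gamma (a + s - 2)), ← div_div,
      mul_div_assoc, div_self (ne_of_gt hΓ2), mul_one]
  have hlim : Tendsto (fun s : ℕ => (2 * |a - 1| * x) / (a + s - 2)) atTop (nhds 0) := by
    apply Tendsto.div_atTop tendsto_const_nhds
    have h1 : Tendsto (fun s : ℕ => (s:ℝ)) atTop atTop := tendsto_natCast_atTop_atTop
    have h2 : Tendsto (fun s : ℕ => a + (s:ℝ) + (-2)) atTop atTop :=
      tendsto_atTop_add_const_right _ _ (tendsto_atTop_add_const_left _ _ h1)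
    simpa [sub_eq_add_neg] using h2
  have h0 : Tendsto (fun s : ℕ => gammaIterTail a s x - Real.exp (-x)) atTop (nhds 0) :=
    squeeze_zero_norm' (by simpa [Real.norm_eq_abs] using key) hlim
  have := h0.add_const (Real.exp (-x))
  simpa using this
end

section
/- Let X be Weibull distributed with survival function e^{−x^α} where 0 < α < 1. Then for each fixed x > 0, the s-iterated tail T̄_s(x) converges to 1 as s → ∞. -/
set_option maxHeartbeats 1000000

open MeasureTheory Set Real Filter Nat

/-- Pointwise identity for the `u = t^a` substitution. -/
lemma weibull_pointwise {a : ℝ} (ha : 0 < a) (k : ℕ) {t : ℝ} (ht : t ∈ Ioi (0:ℝ)) :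
    (|a| * t ^ (a - 1)) • (Real.exp (-(t ^ a)) * (t ^ a) ^ ((1 + (k:ℝ) / a) - 1)) =
      t ^ k * (a * t ^ (a - 1) * Real.exp (-(t ^ a))) := by
  have ht0 : (0:ℝ) < t := ht
  have h2 : (t ^ a) ^ ((1 + (k:ℝ) / a) - 1) = t ^ k := by
    rw [← Real.rpow_natCast t k, ← Real.rpow_mul ht0.le]
    congr 1
    field_simp
    ring
  rw [h2, abs_of_pos ha, smul_eq_mul]
  ring

lemma weibull_moment {a : ℝ} (ha : 0 < a) (k : ℕ) :
    ∫ t in Ioi (0:ℝ), t ^ k * (a * t ^ (a - 1) * Real.exp (-(t ^ a))) =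
      Real.Gamma (1 + (k:ℝ) / a) := by
  have h1 : (0:ℝ) < 1 + (k:ℝ) / a := by positivity
  rw [Real.Gamma_eq_integral h1,
    ← integral_comp_rpow_Ioi (fun u : ℝ => Real.exp (-u) * u ^ ((1 + (k:ℝ) / a) - 1)) ha.ne']
  exact (setIntegral_congr_fun measurableSet_Ioi (fun t ht => weibull_pointwise ha k ht)).symm

lemma weibull_integrable {a : ℝ} (ha : 0 < a) (k : ℕ) :
    IntegrableOn (fun t => t ^ k * (a * t ^ (a - 1) * Real.exp (-(t ^ a)))) (Ioi (0:ℝ)) := by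
  have h1 : (0:ℝ) < 1 + (k:ℝ) / a := by positivity
  have h3 := (integrableOn_Ioi_comp_rpow_iff
    (fun u : ℝ => Real.exp (-u) * u ^ ((1 + (k:ℝ) / a) - 1)) ha.ne').mpr
    (Real.GammaIntegral_convergent h1)
  exact h3.congr_fun (fun t ht => weibull_pointwise ha k ht) measurableSet_Ioi

/-- Log-convexity bound: `Γ(z) z^δ ≤ Γ(z+δ)` for `z > 0`, `δ ≥ 1`. -/
lemma gamma_rpow_le {z δ : ℝ} (hz : 0 < z) (hδ : 1 ≤ δ) :
    Real.Gamma z * z ^ δ ≤ Real.Gamma (z + δ) := by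
  have hδ0 : 0 < δ := lt_of_lt_of_le one_pos hδ
  have hw1 : (0:ℝ) ≤ 1 - 1/δ := by rw [sub_nonneg, div_le_one hδ0]; exact hδ
  have hw2 : (0:ℝ) ≤ 1/δ := by positivity
  have hw3 : (1 - 1/δ) + 1/δ = 1 := sub_add_cancel 1 (1/δ)
  have hcv := Real.convexOn_log_Gamma.2 (mem_Ioi.mpr hz)
    (mem_Ioi.mpr (by linarith : (0:ℝ) < z + δ)) hw1 hw2 hw3
  have hpt : (1 - 1/δ) • z + (1/δ) • (z + δ) = z + 1 := by
    field_simp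
    simp only [smul_eq_mul]
    linear_combination (z + 1) * mul_inv_cancel₀ hδ0.ne'
  rw [hpt] at hcv
  simp only [Function.comp_apply, smul_eq_mul] at hcv
  rw [Real.Gamma_add_one hz.ne', Real.log_mul hz.ne' (Real.Gamma_pos_of_pos hz).ne'] at hcv
  have key : Real.log (Real.Gamma z) + δ * Real.log z ≤ Real.log (Real.Gamma (z + δ)) := by
    have h5 := mul_le_mul_of_nonneg_left hcv hδ0.le
    field_simp at h5 ⊢
    nlinarith
  calc Real.Gamma z * z ^ δ
      = Real.exp (Real.log (Real.Gamma z) + δ * Real.log z) := by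
        rw [Real.exp_add, Real.exp_log (Real.Gamma_pos_of_pos hz),
          Real.rpow_def_of_pos hz, mul_comm δ _]
    _ ≤ Real.exp (Real.log (Real.Gamma (z + δ))) := Real.exp_le_exp.mpr key
    _ = Real.Gamma (z + δ) := Real.exp_log (Real.Gamma_pos_of_pos (by linarith))

/-- Factorial lower bound for `Γ(1 + n/a)` when `0 < a ≤ 1`. -/
lemma gamma_factorial_le {a : ℝ} (ha0 : 0 < a) (ha1 : a ≤ 1) (n : ℕ) :
    (n ! : ℝ) ≤ Real.Gamma (1 + (n:ℝ) / a) := by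
  induction n with
  | zero => simp [Real.Gamma_one]
  | succ n ih =>
    have hz : (0:ℝ) < 1 + (n:ℝ) / a := by positivity
    have hδ : (1:ℝ) ≤ 1 / a := by rw [le_div_iff₀ ha0]; linarith
    have h1 := gamma_rpow_le hz hδ
    have hb : ((n:ℝ) + 1) ≤ (1 + (n:ℝ)/a) ^ (1/a : ℝ) := by
      have h2 : ((n:ℝ) + 1) ≤ 1 + (n:ℝ)/a := by
        have h3 : (n:ℝ) ≤ (n:ℝ)/a := by
          rw [le_div_iff₀ ha0]
          nlinarith [Nat.cast_nonneg (α := ℝ) n]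
        linarith
      calc ((n:ℝ) + 1) ≤ 1 + (n:ℝ)/a := h2
        _ = (1 + (n:ℝ)/a) ^ (1:ℝ) := (Real.rpow_one _).symm
        _ ≤ (1 + (n:ℝ)/a) ^ (1/a : ℝ) :=
            Real.rpow_le_rpow_of_exponent_le
              (by nlinarith [div_nonneg (Nat.cast_nonneg (α := ℝ) n) ha0.le]) hδ
    have heq : 1 + (((n:ℕ)+1 : ℕ):ℝ) / a = (1 + (n:ℝ)/a) + 1/a := by push_cast; ring
    have hcast : (((n+1)! : ℕ) : ℝ) = (n ! : ℝ) * ((n:ℝ) + 1) := by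
      rw [Nat.factorial_succ]; push_cast; ring
    rw [hcast, heq]
    calc ((n ! : ℝ) * ((n:ℝ) + 1)) ≤ Real.Gamma (1 + (n:ℝ)/a) * (1 + (n:ℝ)/a) ^ (1/a : ℝ) :=
          mul_le_mul ih hb (by positivity) (Real.Gamma_pos_of_pos hz).le
      _ ≤ _ := h1

lemma bernoulli_aux {x t : ℝ} (hx : 0 < x) (ht : x < t) (n : ℕ) :
    t ^ (n+1) - ((n:ℝ)+1) * x * t ^ n ≤ (t - x) ^ (n+1) := by
  have ht0 : 0 < t := hx.trans ht
  have hdiv : x / t < 1 := (div_lt_one ht0).mpr ht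
  have hdiv0 : 0 ≤ x / t := div_nonneg hx.le ht0.le
  have hb := one_add_mul_le_pow (by linarith : (-2:ℝ) ≤ -(x/t)) (n+1)
  push_cast at hb
  have h1 := mul_le_mul_of_nonneg_left hb (pow_pos ht0 (n+1)).le
  have e1 : t ^ (n+1) * (1 + -(x/t)) ^ (n+1) = (t - x) ^ (n+1) := by
    rw [← mul_pow]; congr 1; field_simp; ring
  have e2 : t ^ (n+1) * (1 + ((n:ℝ)+1) * -(x/t)) = t ^ (n+1) - ((n:ℝ)+1) * x * t ^ n := by
    field_simp
    ring
  rw [e1, e2] at h1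
  exact h1

/-- Tail of the s-iterated distribution induced by a Weibull variable with shape `α`,
survival function `e^{-x^α}` and density `α t^{α-1} e^{-t^α}`:
`T̄_s(x) = E[(X-x)_+^{s-1}] / Γ(1 + (s-1)/α)`. -/
noncomputable def weibullIterTail (a : ℝ) (s : ℕ) (x : ℝ) : ℝ :=
  (∫ t in Set.Ioi x, (t - x) ^ (s - 1) * (a * t ^ (a - 1) * Real.exp (-(t ^ a)))) /
    Real.Gamma (1 + ((s : ℝ) - 1) / a)

/-- For a Weibull variable with shape `0 < α < 1` and fixed `x > 0`, the s-iterated tail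
converges to 1 as `s → ∞`. -/
theorem weibull_iterated_tail_tendsto_one (a : ℝ) (ha0 : 0 < a) (ha1 : a < 1)
    (x : ℝ) (hx : 0 < x) :
    Tendsto (fun s : ℕ => weibullIterTail a s x) atTop (nhds 1) := by
  set f : ℝ → ℝ := fun t => a * t ^ (a - 1) * Real.exp (-(t ^ a)) with hfdef
  have hfm : Measurable f := by fun_prop
  have hf_nonneg : ∀ t ∈ Ioi (0:ℝ), 0 ≤ f t := by
    intro t ht
    have ht0 : (0:ℝ) < t := ht
    have := Real.exp_pos (-(t ^ a))
    have := Real.rpow_nonneg ht0.le (a - 1)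
    positivity
  set G : ℕ → ℝ := fun k => Real.Gamma (1 + (k:ℝ)/a) with hGdef
  have hGpos : ∀ k, 0 < G k := fun k => Real.Gamma_pos_of_pos (by positivity)
  have hGfac : ∀ k, (k ! : ℝ) ≤ G k := fun k => gamma_factorial_le ha0 ha1.le k
  have hmom : ∀ k, ∫ t in Ioi (0:ℝ), t ^ k * f t = G k := weibull_moment ha0
  have hint : ∀ k, IntegrableOn (fun t => t ^ k * f t) (Ioi (0:ℝ)) := weibull_integrable ha0
  set N : ℕ → ℝ := fun n => ∫ t in Ioi x, (t - x) ^ (n+1) * f t with hNdef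
  -- integrability on `Ioi x`
  have hIx : ∀ k, IntegrableOn (fun t => t ^ k * f t) (Ioi x) :=
    fun k => (hint k).mono_set (Ioi_subset_Ioi hx.le)
  have hIN : ∀ n, IntegrableOn (fun t => (t - x) ^ (n+1) * f t) (Ioi x) := by
    intro n
    have hmeas : AEStronglyMeasurable (fun t => (t - x) ^ (n+1) * f t)
        (volume.restrict (Ioi x)) :=
      (((measurable_id.sub_const x).pow_const (n+1)).mul hfm).aestronglyMeasurable
    refine Integrable.mono (hIx (n+1)) hmeas ?_
    · filter_upwards [ae_restrict_mem measurableSet_Ioi] with t ht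
      have ht0 : 0 < t := hx.trans ht
      have h1 : (0:ℝ) ≤ t - x := by linarith [mem_Ioi.mp ht]
      rw [Real.norm_eq_abs, Real.norm_eq_abs, abs_mul ((t - x) ^ (n+1)) (f t),
        abs_mul (t ^ (n+1)) (f t)]
      refine mul_le_mul_of_nonneg_right ?_ (abs_nonneg (f t))
      rw [abs_pow, abs_pow]
      refine pow_le_pow_left₀ (abs_nonneg _) ?_ (n+1)
      rw [abs_of_nonneg h1, abs_of_pos ht0]
      linarith
  -- the tail integral over `Ioi x` of the pure moment integrand is at most the full moment
  have htail : ∀ k, ∫ t in Ioi x, t ^ k * f t ≤ G k := by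
    intro k
    rw [← hmom k]
    refine setIntegral_mono_set (hint k) ?_ (HasSubset.Subset.eventuallyLE (Ioi_subset_Ioi hx.le))
    filter_upwards [ae_restrict_mem measurableSet_Ioi] with t ht
    have ht0 : (0:ℝ) < t := ht
    exact mul_nonneg (pow_nonneg ht0.le k) (hf_nonneg t ht)
  -- upper bound : N n ≤ G (n+1)
  have hub : ∀ n, N n ≤ G (n+1) := by
    intro n
    refine le_trans (setIntegral_mono_on (hIN n) (hIx (n+1)) measurableSet_Ioi ?_) (htail (n+1))
    intro t ht
    have ht' : x < t := ht
    have ht0 : 0 < t := hx.trans ht'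
    refine mul_le_mul_of_nonneg_right ?_ (hf_nonneg t (hx.trans ht'))
    exact pow_le_pow_left₀ (by linarith) (by linarith) (n+1)
  -- split of the moment over `Ioc 0 x` and `Ioi x`
  have hsplit : ∀ k, G k = (∫ t in Ioc 0 x, t ^ k * f t) + ∫ t in Ioi x, t ^ k * f t := by
    intro k
    rw [← hmom k, ← Ioc_union_Ioi_eq_Ioi hx.le]
    exact setIntegral_union (Ioc_disjoint_Ioi le_rfl) measurableSet_Ioi
      ((hint k).mono_set Ioc_subset_Ioi_self) ((hint k).mono_set (Ioi_subset_Ioi hx.le))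
  -- small-interval bound
  have hIoc : ∀ n, (∫ t in Ioc 0 x, t ^ (n+1) * f t) ≤ x ^ n * G 1 := by
    intro n
    have h1 : (∫ t in Ioc 0 x, t ^ (n+1) * f t) ≤ ∫ t in Ioc 0 x, x ^ n * (t ^ 1 * f t) := by
      refine setIntegral_mono_on ((hint (n+1)).mono_set Ioc_subset_Ioi_self)
        (((hint 1).mono_set Ioc_subset_Ioi_self).const_mul _) measurableSet_Ioc ?_
      intro t ht
      have ht0 : 0 < t := ht.1
      have htx : t ≤ x := ht.2
      have : t ^ (n+1) ≤ x ^ n * t ^ 1 := by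
        rw [pow_succ, pow_one]
        exact mul_le_mul_of_nonneg_right (pow_le_pow_left₀ ht0.le htx n) ht0.le
      have h6 := mul_le_mul_of_nonneg_right this (hf_nonneg t ht.1)
      simpa [mul_assoc] using h6
    rw [integral_const_mul] at h1
    refine h1.trans ?_
    refine mul_le_mul_of_nonneg_left ?_ (pow_nonneg hx.le n)
    rw [← hmom 1]
    refine setIntegral_mono_set (hint 1) ?_
      (HasSubset.Subset.eventuallyLE Ioc_subset_Ioi_self)
    filter_upwards [ae_restrict_mem measurableSet_Ioi] with t ht
    have ht0 : (0:ℝ) < t := ht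
    exact mul_nonneg (pow_nonneg ht0.le 1) (hf_nonneg t ht)
  -- lower bound : G (n+1) - x^n * G 1 - (n+1) x G n ≤ N n
  have hlb : ∀ n, G (n+1) - x ^ n * G 1 - ((n:ℝ)+1) * x * G n ≤ N n := by
    intro n
    have hc : (0:ℝ) ≤ ((n:ℝ)+1) * x := by positivity
    have hcomb : IntegrableOn
        (fun t => t ^ (n+1) * f t - (((n:ℝ)+1) * x) * (t ^ n * f t)) (Ioi x) :=
      (hIx (n+1)).sub ((hIx n).const_mul _)
    have hmono : (∫ t in Ioi x, (t ^ (n+1) * f t - (((n:ℝ)+1) * x) * (t ^ n * f t)))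
        ≤ N n := by
      refine setIntegral_mono_on hcomb (hIN n) measurableSet_Ioi ?_
      intro t ht
      have ht' : x < t := ht
      have key := bernoulli_aux hx ht' n
      have hfn := hf_nonneg t (hx.trans ht')
      calc t ^ (n+1) * f t - (((n:ℝ)+1) * x) * (t ^ n * f t)
          = (t ^ (n+1) - ((n:ℝ)+1) * x * t ^ n) * f t := by ring
        _ ≤ (t - x) ^ (n+1) * f t := mul_le_mul_of_nonneg_right key hfn
    rw [integral_sub (hIx (n+1)) ((hIx n).const_mul _), integral_const_mul] at hmono
    have h2 : (((n:ℝ)+1) * x) * (∫ t in Ioi x, t ^ n * f t) ≤ (((n:ℝ)+1) * x) * G n :=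
      mul_le_mul_of_nonneg_left (htail n) hc
    have h3 := hsplit (n+1)
    have h4 := hIoc n
    have h5 : (0:ℝ) ≤ ∫ t in Ioi x, t ^ (n+1) * f t := by
      refine setIntegral_nonneg measurableSet_Ioi ?_
      intro t ht
      have ht0 : (0:ℝ) < t := hx.trans ht
      exact mul_nonneg (pow_nonneg ht0.le _) (hf_nonneg t ht0)
    nlinarith [hmono]
  -- the tail expressed via N and G
  have hT : ∀ n : ℕ, weibullIterTail a (n+2) x = N n / G (n+1) := by
    intro n
    have h1 : (n + 2) - 1 = n + 1 := rfl
    rw [weibullIterTail, h1]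
    have h3 : (1 : ℝ) + (((n:ℕ)+2 : ℕ) - 1 : ℝ) / a = 1 + ((((n:ℕ)+1 : ℕ)) : ℝ)/a := by
      push_cast; ring
    rw [h3]
  rw [← tendsto_add_atTop_iff_nat 2]
  have hTfun : (fun n : ℕ => weibullIterTail a (n+2) x) = fun n => N n / G (n+1) := by
    funext n; exact hT n
  rw [hTfun]
  -- limits of the error terms
  have hB : Tendsto (fun n : ℕ => x ^ n * G 1 / G (n+1)) atTop (nhds 0) := by
    refine squeeze_zero (g := fun n => G 1 * (x ^ n / (n ! : ℝ))) (fun n => ?_) (fun n => ?_) ?_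
    · exact div_nonneg (mul_nonneg (pow_nonneg hx.le n) (hGpos 1).le) (hGpos (n+1)).le
    · show x ^ n * G 1 / G (n+1) ≤ G 1 * (x ^ n / (n !))
      have hfac : (0:ℝ) < (n ! : ℝ) := by exact_mod_cast Nat.factorial_pos n
      have hle : (n ! : ℝ) ≤ G (n+1) := by
        refine le_trans ?_ (hGfac (n+1))
        exact_mod_cast Nat.factorial_le (Nat.le_succ n)
      rw [mul_div_assoc', mul_comm (G 1) (x ^ n)]
      gcongr
    · have := (FloorSemiring.tendsto_pow_div_factorial_atTop (K := ℝ) x).const_mul (G 1)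
      simpa using this
  have hC : Tendsto (fun n : ℕ => ((n:ℝ)+1) * x * G n / G (n+1)) atTop (nhds 0) := by
    have hδ : (1:ℝ) ≤ 1 / a := by rw [le_div_iff₀ ha0]; linarith
    refine squeeze_zero (g := fun n : ℕ => x * ((n:ℝ)+1) ^ (1 - 1/a : ℝ))
      (fun n => ?_) (fun n => ?_) ?_
    · exact div_nonneg (mul_nonneg (by positivity) (hGpos n).le) (hGpos (n+1)).le
    · show ((n:ℝ)+1) * x * G n / G (n+1) ≤ x * ((n:ℝ)+1) ^ (1 - 1/a : ℝ)
      have hzpos : (0:ℝ) < 1 + (n:ℝ)/a := by positivity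
      have hkey : G n * ((n:ℝ)+1) ^ (1/a : ℝ) ≤ G (n+1) := by
        have h1 := gamma_rpow_le hzpos hδ
        have h2 : ((n:ℝ)+1) ^ (1/a : ℝ) ≤ (1 + (n:ℝ)/a) ^ (1/a : ℝ) := by
          refine Real.rpow_le_rpow (by positivity) ?_ (by positivity)
          have : (n:ℝ) ≤ (n:ℝ)/a := by
            rw [le_div_iff₀ ha0]; nlinarith [Nat.cast_nonneg (α := ℝ) n]
          linarith
        have heq : 1 + ((n:ℝ)+1)/a = (1 + (n:ℝ)/a) + 1/a := by ring
        calc G n * ((n:ℝ)+1) ^ (1/a : ℝ)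
            ≤ G n * (1 + (n:ℝ)/a) ^ (1/a : ℝ) :=
              mul_le_mul_of_nonneg_left h2 (hGpos n).le
          _ ≤ Real.Gamma ((1 + (n:ℝ)/a) + 1/a) := h1
          _ = G (n+1) := by rw [hGdef]; push_cast; rw [heq]
      have hrpos : (0:ℝ) < ((n:ℝ)+1) ^ (1/a : ℝ) := Real.rpow_pos_of_pos (by positivity) _
      have step1 : ((n:ℝ)+1) * x * G n / G (n+1)
          ≤ ((n:ℝ)+1) * x * G n / (G n * ((n:ℝ)+1) ^ (1/a : ℝ)) := by
        gcongr
      refine step1.trans (le_of_eq ?_)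
      have hGn := (hGpos n).ne'
      rw [Real.rpow_sub (by positivity : (0:ℝ) < (n:ℝ)+1), Real.rpow_one]
      field_simp
    · have h1 : Tendsto (fun n : ℕ => ((n:ℝ)+1)) atTop atTop :=
        tendsto_atTop_add_const_right atTop 1 tendsto_natCast_atTop_atTop
      have h2 : (0:ℝ) < 1/a - 1 := by
        have : (1:ℝ) < 1/a := by rw [lt_div_iff₀ ha0]; linarith
        linarith
      have h3 := (tendsto_rpow_neg_atTop h2).comp h1
      have h4 : (fun n : ℕ => ((n:ℝ)+1) ^ (1 - 1/a : ℝ))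
          = fun n : ℕ => ((n:ℝ)+1) ^ (-(1/a - 1) : ℝ) := by
        funext n; congr 1; ring
      have h5 := h3.const_mul x
      simp only [Function.comp] at h5
      rw [show (fun n : ℕ => x * ((n:ℝ)+1) ^ (1 - 1/a : ℝ))
          = fun n : ℕ => x * ((n:ℝ)+1) ^ (-(1/a - 1) : ℝ) from funext fun n => by congr 1; ring]
      simpa using h5
  -- squeeze
  have hg : Tendsto (fun n : ℕ => 1 - x ^ n * G 1 / G (n+1) - ((n:ℝ)+1) * x * G n / G (n+1))
      atTop (nhds 1) := by
    have := (tendsto_const_nhds (x := (1:ℝ)) (f := atTop (α := ℕ))).sub hB |>.sub hC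
    simpa using this
  refine tendsto_of_tendsto_of_tendsto_of_le_of_le hg tendsto_const_nhds
    (fun n => ?_) (fun n => ?_)
  · have h1 := (div_le_div_iff_of_pos_right (hGpos (n+1))).mpr (hlb n)
    refine le_trans (le_of_eq ?_) h1
    rw [sub_div, sub_div, div_self (hGpos (n+1)).ne']
  · exact (div_le_one (hGpos (n+1))).mpr (hub n)
end

section
/- For fixed α > 0, the sequence A(s) = s·Γ(1 + (s−1)/α) / Γ(1 + s/α) converges to 0 as s → ∞ when α < 1. -/
open Real Filter

lemma gamma_key_aux (a x : ℝ) (ha0 : 0 < a) (ha1 : a < 1) (hx : 0 < x) :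
    x ^ (1/a) * Real.Gamma x ≤ Real.Gamma (x + 1/a) := by
  have hGx : 0 < Real.Gamma x := Real.Gamma_pos_of_pos hx
  have ht : 0 < x + 1/a := by positivity
  have hGt : 0 < Real.Gamma (x + 1/a) := Real.Gamma_pos_of_pos ht
  have h1 : Real.Gamma ((1-a)*x + a*(x+1/a)) ≤
      Real.Gamma x ^ (1-a) * Real.Gamma (x+1/a) ^ a :=
    Real.Gamma_mul_add_mul_le_rpow_Gamma_mul_rpow_Gamma hx ht (by linarith) ha0 (by ring)
  have harg : (1-a)*x + a*(x+1/a) = x + 1 := by field_simp; ring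
  rw [harg, Real.Gamma_add_one hx.ne'] at h1
  have h2 : x * Real.Gamma x ^ a ≤ Real.Gamma (x+1/a) ^ a := by
    have hc : (0:ℝ) < Real.Gamma x ^ (1-a) := Real.rpow_pos_of_pos hGx _
    refine le_of_mul_le_mul_right ?_ hc
    calc x * Real.Gamma x ^ a * Real.Gamma x ^ (1-a)
        = x * Real.Gamma x := by
          rw [mul_assoc, ← Real.rpow_add hGx]; norm_num
      _ ≤ Real.Gamma x ^ (1-a) * Real.Gamma (x+1/a) ^ a := h1
      _ = Real.Gamma (x+1/a) ^ a * Real.Gamma x ^ (1-a) := by ring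
  have h3 := Real.rpow_le_rpow (by positivity) h2 (by positivity : (0:ℝ) ≤ 1/a)
  have ha' : a ≠ 0 := ha0.ne'
  rwa [Real.mul_rpow hx.le (by positivity), ← Real.rpow_mul hGx.le, ← Real.rpow_mul hGt.le,
    mul_one_div_cancel ha', Real.rpow_one, Real.rpow_one] at h3

/-- For fixed `0 < α < 1`, the sequence `A(s) = s Γ(1 + (s-1)/α) / Γ(1 + s/α)`
converges to 0 as `s → ∞`. -/
theorem gamma_ratio_tendsto_zero (a : ℝ) (ha0 : 0 < a) (ha1 : a < 1) :
    Tendsto (fun s : ℕ =>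
      (s : ℝ) * Real.Gamma (1 + ((s : ℝ) - 1) / a) / Real.Gamma (1 + (s : ℝ) / a))
      atTop (nhds 0) := by
  have he : (0:ℝ) < 1/a - 1 := by
    have : 1 < 1/a := (one_lt_div ha0).2 ha1
    linarith
  have hb : Tendsto (fun s : ℕ => (s:ℝ) ^ (1 - 1/a)) atTop (nhds 0) := by
    have := (tendsto_rpow_neg_atTop he).comp tendsto_natCast_atTop_atTop (α := ℕ)
    simpa [neg_sub, Function.comp_def] using this
  refine squeeze_zero (fun s => ?_) (fun s => ?_) hb
  · rcases Nat.eq_zero_or_pos s with rfl | hs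
    · simp
    · have hx : 0 < 1 + ((s : ℝ) - 1) / a := by
        have : (1:ℝ) ≤ s := by exact_mod_cast hs
        have : (0:ℝ) ≤ ((s:ℝ) - 1) / a := div_nonneg (by linarith) ha0.le
        linarith
      have ht : 0 < 1 + (s:ℝ)/a := by positivity
      have := Real.Gamma_pos_of_pos hx
      have := Real.Gamma_pos_of_pos ht
      positivity
  · rcases Nat.eq_zero_or_pos s with rfl | hs
    · simp only [Nat.cast_zero, zero_mul, zero_div]
      exact Real.rpow_nonneg le_rfl _
    · have hs1 : (1:ℝ) ≤ s := by exact_mod_cast hs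
      set x : ℝ := 1 + ((s : ℝ) - 1) / a with hxdef
      have hx : 0 < x := by
        have : (0:ℝ) ≤ ((s:ℝ) - 1) / a := div_nonneg (by linarith) ha0.le
        simp only [hxdef]; linarith
      have hsx : (s:ℝ) ≤ x := by
        rw [hxdef]
        have h1 : (s:ℝ) - 1 ≤ ((s:ℝ) - 1) / a := by
          rw [le_div_iff₀ ha0]
          nlinarith
        linarith
      have hGx : 0 < Real.Gamma x := Real.Gamma_pos_of_pos hx
      have hteq : 1 + (s:ℝ)/a = x + 1/a := by
        rw [hxdef]; field_simp; ring
      have hGt : 0 < Real.Gamma (x + 1/a) := Real.Gamma_pos_of_pos (by positivity)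
      have hkey := gamma_key_aux a x ha0 ha1 hx
      have hxp : (0:ℝ) < x ^ (1/a) := Real.rpow_pos_of_pos hx _
      rw [hteq]
      calc (s:ℝ) * Real.Gamma x / Real.Gamma (x + 1/a)
          ≤ (s:ℝ) * Real.Gamma x / (x ^ (1/a) * Real.Gamma x) := by
            apply div_le_div_of_nonneg_left (by positivity) (by positivity) hkey
        _ = (s:ℝ) / x ^ (1/a) := by
            rw [mul_div_mul_right _ _ hGx.ne']
        _ ≤ (s:ℝ) / (s:ℝ) ^ (1/a) := by
            apply div_le_div_of_nonneg_left (by positivity) (by positivity)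
            exact Real.rpow_le_rpow (by positivity) hsx (by positivity)
        _ = (s:ℝ) ^ (1 - 1/a) := by
            rw [Real.rpow_sub (by linarith), Real.rpow_one]
end
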